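/- arXiv:2407.04672 — 2 statements merged into one kernel-verified Lean document; each statement's English description precedes it below -/
import Mathlib

section
/- Let μ be the Gibbs distribution of a spin system on a finite graph G = (V,E) with a partition V = U_1 ⊎ ⋯ ⊎ U_k and let 0 ≤ ℓ ≤ k−1. Suppose there exist γ_0, γ_1, …, γ_{ℓ−1} such that for every 0 ≤ r ≤ ℓ−1, every R ⊆ [k] with |R| = r, every pinning τ ∈ [q]^{U_R}, and every f: [q]^V → ℝ, it holds that Var_{μ^τ}[f] ≤ (γ_r/(k−r)) · Σ_{j ∈ [k]∖R} μ^τ[Var_{V∖U_{R∪{j}}}[f]] (i.e., the relaxation time of the (k−r)↔1 down-up walk on μ^τ is at most γ_r). Then for every f: [q]^V → ℝ, Var_μ[f] ≤ ((∏_{i=0}^{ℓ−1} γ_i)/C(k,ℓ)) · Σ_{R ⊆ [k], |R| = ℓ} μ[Var_{V∖U_R}[f]], i.e., the relaxation time of the k↔ℓ down-up walk satisfies T_rel(k,ℓ) ≤ ∏_{i=0}^{ℓ−1} γ_i. -/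
open Finset
open scoped BigOperators Classical

namespace Paper

/-- Configurations: assignments of one of `q` spins to each of `n` vertices. -/
abbrev Config (n q : ℕ) := Fin n → Fin q

/-- A spin system on a graph `G` on vertex set `Fin n` with spin set `Fin q`:
nonnegative external fields and nonnegative symmetric interaction matrices. -/
structure SpinSystem (n q : ℕ) (G : SimpleGraph (Fin n)) where
  b : Fin n → Fin q → ℝ
  A : Fin n → Fin n → Fin q → Fin q → ℝ
  b_nonneg : ∀ v a, 0 ≤ b v a
  A_nonneg : ∀ v w a c, 0 ≤ A v w a c
  A_symm : ∀ v w a c, A v w a c = A w v c a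

variable {n q k : ℕ}

/-- The number of neighbours of `v` (in `G`) lying inside `Λ`. -/
noncomputable def degIn (G : SimpleGraph (Fin n)) (Λ : Finset (Fin n)) (v : Fin n) : ℕ :=
  (Λ.filter fun w => G.Adj v w).card

/-- The maximum degree of `G`. -/
noncomputable def maxDeg (G : SimpleGraph (Fin n)) : ℕ :=
  univ.sup fun v => degIn G univ v

/-- The edges of `G`, listed as ordered pairs `p` with `p.1 < p.2`. -/
noncomputable def edgePairs (G : SimpleGraph (Fin n)) : Finset (Fin n × Fin n) :=
  univ.filter fun p => p.1 < p.2 ∧ G.Adj p.1 p.2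

/-- Conditional Gibbs weight: the free set is `Λ`, and the pinning uses the values
of `τ` outside of `Λ`.  Edges lying entirely outside `Λ` are dropped. -/
noncomputable def condWeight {G : SimpleGraph (Fin n)} (S : SpinSystem n q G)
    (Λ : Finset (Fin n)) (τ σ : Config n q) : ℝ :=
  (if ∀ v, v ∉ Λ → σ v = τ v then (1 : ℝ) else 0)
    * (∏ v ∈ Λ, S.b v (σ v))
    * ∏ p ∈ (edgePairs G).filter (fun p => p.1 ∈ Λ ∨ p.2 ∈ Λ),
        S.A p.1 p.2 (σ p.1) (σ p.2)

/-- The conditional Gibbs distribution `μ^τ` with free set `Λ` and pinning `τ`. -/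
noncomputable def condDist {G : SimpleGraph (Fin n)} (S : SpinSystem n q G)
    (Λ : Finset (Fin n)) (τ : Config n q) : Config n q → ℝ :=
  fun σ => condWeight S Λ τ σ / ∑ σ' : Config n q, condWeight S Λ τ σ'

/-- The Gibbs distribution of the spin system. -/
noncomputable def gibbsDist {G : SimpleGraph (Fin n)} (S : SpinSystem n q G) :
    Config n q → ℝ :=
  fun σ => condWeight S univ σ σ / ∑ σ' : Config n q, condWeight S univ σ' σ'

/-- Every conditional weight has positive total mass. -/
def PosCondMass {G : SimpleGraph (Fin n)} (S : SpinSystem n q G) : Prop :=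
  ∀ (Λ : Finset (Fin n)) (τ : Config n q), 0 < ∑ σ : Config n q, condWeight S Λ τ σ

/-- Expectation of `f` under (the finitely supported density) `μ`. -/
noncomputable def expVal (μ f : Config n q → ℝ) : ℝ := ∑ σ, μ σ * f σ

/-- Variance of `f` under `μ`. -/
noncomputable def varD (μ f : Config n q → ℝ) : ℝ :=
  expVal μ fun σ => (f σ - expVal μ f) ^ 2

/-- `μ` conditioned to agree with `σ₀` on the set `T`. -/
noncomputable def restrictDist (μ : Config n q → ℝ) (T : Finset (Fin n)) (σ₀ : Config n q) :
    Config n q → ℝ :=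
  fun σ => (if ∀ v ∈ T, σ v = σ₀ v then μ σ else 0)
    / ∑ σ' ∈ univ.filter (fun σ' : Config n q => ∀ v ∈ T, σ' v = σ₀ v), μ σ'

/-- `μ[Var_S[f]]`: the average over `σ ~ μ` of the variance of `f` under `μ`
conditioned on the coordinates outside the free set `Sfree`. -/
noncomputable def avgCondVar (μ : Config n q → ℝ) (Sfree : Finset (Fin n))
    (f : Config n q → ℝ) : ℝ :=
  ∑ σ, μ σ * varD (restrictDist μ Sfreeᶜ σ) f

/-- `C` is an upper bound on the relaxation time of the Glauber dynamics on `μ`: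
approximate tensorization of variance with constant `C`. -/
def IsRelaxBound (μ : Config n q → ℝ) (C : ℝ) : Prop :=
  0 ≤ C ∧ ∀ f : Config n q → ℝ,
    varD μ f ≤ C / (n : ℝ) * ∑ v : Fin n, avgCondVar μ {v} f

/-- `π` is a coupling of `μ` and `ν`. -/
structure IsCoupling (μ ν : Config n q → ℝ) (π : Config n q → Config n q → ℝ) : Prop where
  nonneg : ∀ x y, 0 ≤ π x y
  fst_marginal : ∀ x, ∑ y, π x y = μ x
  snd_marginal : ∀ y, ∑ x, π x y = ν y

/-- Weighted Hamming distance with weight function `ρ`. -/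
noncomputable def hamW (ρ : Fin n → ℕ) (x y : Config n q) : ℝ :=
  ∑ v ∈ univ.filter (fun v => x v ≠ y v), (ρ v : ℝ)

/-- Expected weighted Hamming distance under a coupling `π`. -/
noncomputable def expHam (π : Config n q → Config n q → ℝ) (ρ : Fin n → ℕ) : ℝ :=
  ∑ x, ∑ y, π x y * hamW ρ x y

/-- Coupling independence (with a fixed witnessing weight `ρ`) of the Gibbs
distribution of the spin system `S`, using Gibbs conditional distributions. -/
def CoupIndepWith {G : SimpleGraph (Fin n)} (S : SpinSystem n q G) (ρ : Fin n → ℕ)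
    (C : ℝ) : Prop :=
  (∀ v, 0 < ρ v) ∧
  ∀ (P : Finset (Fin n)) (v₀ : Fin n) (σ₁ σ₂ : Config n q),
    v₀ ∈ P → σ₁ v₀ ≠ σ₂ v₀ → (∀ v ∈ P, v ≠ v₀ → σ₁ v = σ₂ v) →
    ∃ π, IsCoupling (condDist S Pᶜ σ₁) (condDist S Pᶜ σ₂) π ∧
      expHam π ρ ≤ C * (ρ v₀ : ℝ)

/-- The spin system `S` is `C`-coupling independent. -/
def CoupIndep {G : SimpleGraph (Fin n)} (S : SpinSystem n q G) (C : ℝ) : Prop :=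
  ∃ ρ : Fin n → ℕ, CoupIndepWith S ρ C

/-- `C`-coupling independence for a bare distribution `μ`, using conditionals
obtained by restriction. -/
def CoupIndepDist (μ : Config n q → ℝ) (C : ℝ) : Prop :=
  ∃ ρ : Fin n → ℕ, (∀ v, 0 < ρ v) ∧
  ∀ (P : Finset (Fin n)) (v₀ : Fin n) (σ₁ σ₂ : Config n q),
    v₀ ∈ P → σ₁ v₀ ≠ σ₂ v₀ → (∀ v ∈ P, v ≠ v₀ → σ₁ v = σ₂ v) →
    ∃ π, IsCoupling (restrictDist μ P σ₁) (restrictDist μ P σ₂) π ∧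
      expHam π ρ ≤ C * (ρ v₀ : ℝ)

/-- `Λ ∈ D(η)`: the induced subgraph `G[Λ]` has maximum degree at most `η·Δ`. -/
def InDeta (G : SimpleGraph (Fin n)) (η : ℝ) (Λ : Finset (Fin n)) : Prop :=
  ∀ v ∈ Λ, (degIn G Λ v : ℝ) ≤ η * (maxDeg G : ℝ)

/-- `U` is a partition of the vertex set into `k` (possibly empty) parts. -/
def IsPartition (U : Fin k → Finset (Fin n)) : Prop :=
  (∀ i j, i ≠ j → Disjoint (U i) (U j)) ∧ ∀ v : Fin n, ∃ i, v ∈ U i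

/-- A `(ξ,k)`-degree partition of `G`. -/
def IsDegreePartition (G : SimpleGraph (Fin n)) (ξ : ℝ) (U : Fin k → Finset (Fin n)) :
    Prop :=
  IsPartition U ∧ ∀ (v : Fin n) (i : Fin k),
    (degIn G (U i) v : ℝ) ≤ (1 + ξ) * (maxDeg G : ℝ) / (k : ℝ)

/-- `U_R = ⋃_{i ∈ R} U_i`. -/
noncomputable def unionBlocks (U : Fin k → Finset (Fin n)) (R : Finset (Fin k)) :
    Finset (Fin n) :=
  R.biUnion U

/-- The Glauber update `P_v` at vertex `v` for the distribution `μ`. -/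
noncomputable def glauberUpdate (μ : Config n q → ℝ) (v : Fin n) (x y : Config n q) : ℝ :=
  if ∀ u, u ≠ v → y u = x u then
    (if 0 < ∑ σ ∈ univ.filter (fun σ : Config n q => ∀ u, u ≠ v → σ u = x u), μ σ then
      μ y / ∑ σ ∈ univ.filter (fun σ : Config n q => ∀ u, u ≠ v → σ u = x u), μ σ
    else if y = x then 1 else 0)
  else 0

/-- The transition matrix of the Glauber dynamics on `μ`. -/
noncomputable def glauberP (μ : Config n q → ℝ) : Config n q → Config n q → ℝ :=
  fun x y => (1 / (n : ℝ)) * ∑ v : Fin n, glauberUpdate μ v x y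

/-- One step of a Markov kernel applied to a distribution. -/
noncomputable def stepD (P : Config n q → Config n q → ℝ) (ν : Config n q → ℝ) :
    Config n q → ℝ :=
  fun y => ∑ x, ν x * P x y

/-- The Dirac distribution at `x₀`. -/
noncomputable def delta (x₀ : Config n q) : Config n q → ℝ :=
  fun y => if y = x₀ then 1 else 0

/-- Total variation distance. -/
noncomputable def dTV (μ ν : Config n q → ℝ) : ℝ := (1 / 2) * ∑ σ, |μ σ - ν σ|

/-- TV distance to `μ` after `t` steps of the Glauber dynamics on `μ` started at `x₀`. -/
noncomputable def glauberDist (μ : Config n q → ℝ) (x₀ : Config n q) (t : ℕ) : ℝ :=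
  dTV ((stepD (glauberP μ))^[t] (delta x₀)) μ

/-- Coordinatewise partial order on configurations induced by the per-vertex
total orders `le`. -/
def ConfLE (le : Fin n → Fin q → Fin q → Prop) (x y : Config n q) : Prop :=
  ∀ v, le v (x v) (y v)

/-- Stochastic domination with respect to the order `le`. -/
def StochDom (le : Fin n → Fin q → Fin q → Prop) (μ ν : Config n q → ℝ) : Prop :=
  ∃ π, IsCoupling μ ν π ∧ ∀ x y, π x y ≠ 0 → ConfLE le x y

/-- `μ` is a monotone spin system w.r.t. the per-vertex orders `le`. -/
def MonotoneSystem (le : Fin n → Fin q → Fin q → Prop) (μ : Config n q → ℝ) : Prop :=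
  ∀ (v : Fin n) (x y : Config n q), ConfLE le x y →
    StochDom le (glauberUpdate μ v x) (glauberUpdate μ v y)

/-- Hardcore weight: spin `1` means occupied. -/
noncomputable def hcWeight (G : SimpleGraph (Fin n)) (lam : ℝ) (σ : Config n 2) : ℝ :=
  if ∀ u v, G.Adj u v → ¬(σ u = 1 ∧ σ v = 1) then
    lam ^ (univ.filter fun v => σ v = 1).card
  else 0

/-- The hardcore distribution on `G` with fugacity `lam`. -/
noncomputable def hardcoreDist (G : SimpleGraph (Fin n)) (lam : ℝ) : Config n 2 → ℝ :=
  fun σ => hcWeight G lam σ / ∑ σ' : Config n 2, hcWeight G lam σ'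

/-- The tree uniqueness threshold `λ_c(Δ)`. -/
noncomputable def lambdaC (Δ : ℕ) : ℝ := ((Δ : ℝ) - 1) ^ (Δ - 1) / ((Δ : ℝ) - 2) ^ Δ

/-- `G` is bipartite with parts `VL` and `VLᶜ`. -/
def Bipartite (G : SimpleGraph (Fin n)) (VL : Finset (Fin n)) : Prop :=
  ∀ u v, G.Adj u v → (u ∈ VL ↔ v ∉ VL)

/-- Maximum degree of `G` among the vertices of `W`. -/
noncomputable def maxDegOn (G : SimpleGraph (Fin n)) (W : Finset (Fin n)) : ℕ :=
  W.sup fun v => degIn G univ v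

/-- The marginal of `μ` on `W`, realized as a distribution on full configurations
that vanish (take spin `0`) outside of `W`. -/
noncomputable def marginalOn (μ : Config n 2 → ℝ) (W : Finset (Fin n)) :
    Config n 2 → ℝ :=
  fun σ => if ∀ v, v ∉ W → σ v = 0 then
      ∑ σ' ∈ univ.filter (fun σ' : Config n 2 => ∀ v ∈ W, σ' v = σ v), μ σ'
    else 0

/-- Proper list colorings of `G` with lists `L`. -/
noncomputable def properColorings (G : SimpleGraph (Fin n)) (L : Fin n → Finset (Fin q)) :
    Finset (Config n q) :=
  univ.filter fun σ => (∀ v, σ v ∈ L v) ∧ ∀ u v, G.Adj u v → σ u ≠ σ v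

/-- Uniform distribution over a finite set of configurations. -/
noncomputable def uniformOn (Ω : Finset (Config n q)) : Config n q → ℝ :=
  fun σ => if σ ∈ Ω then (1 : ℝ) / (Ω.card : ℝ) else 0

/-- The subgraph of `G` induced on `W` (kept on the same vertex type). -/
def restrictG (G : SimpleGraph (Fin n)) (W : Finset (Fin n)) : SimpleGraph (Fin n) where
  Adj u v := G.Adj u v ∧ u ∈ W ∧ v ∈ W
  symm := ⟨fun u v h => ⟨G.adj_symm h.1, h.2.2, h.2.1⟩⟩
  loopless := ⟨fun v h => G.loopless.irrefl v h.1⟩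

/-- The vertex set of the connected component of `v` in `G[W]` (empty if `v ∉ W`). -/
noncomputable def compIn (G : SimpleGraph (Fin n)) (W : Finset (Fin n)) (v : Fin n) :
    Finset (Fin n) :=
  if v ∈ W then univ.filter (fun w => w ∈ W ∧ (restrictG G W).Reachable v w) else ∅

section Aux
variable {n q : ℕ} {G : SimpleGraph (Fin n)}

lemma condWeight_nonneg (S : SpinSystem n q G) (Λ : Finset (Fin n)) (τ σ : Config n q) :
    0 ≤ condWeight S Λ τ σ := by
  unfold condWeight
  refine mul_nonneg (mul_nonneg ?_ ?_) ?_
  · split <;> norm_num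
  · exact Finset.prod_nonneg fun v _ => S.b_nonneg _ _
  · exact Finset.prod_nonneg fun p _ => S.A_nonneg _ _ _ _

lemma condDist_nonneg (S : SpinSystem n q G) (Λ : Finset (Fin n)) (τ : Config n q) :
    ∀ σ, 0 ≤ condDist S Λ τ σ := fun σ =>
  div_nonneg (condWeight_nonneg S Λ τ σ)
    (Finset.sum_nonneg fun σ' _ => condWeight_nonneg S Λ τ σ')

lemma condDist_sum_one (S : SpinSystem n q G) (hpos : PosCondMass S)
    (Λ : Finset (Fin n)) (τ : Config n q) :
    ∑ σ : Config n q, condDist S Λ τ σ = 1 := by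
  unfold condDist
  rw [← Finset.sum_div, div_self (ne_of_gt (hpos Λ τ))]

lemma condDist_ne_zero_weight {S : SpinSystem n q G} {Λ : Finset (Fin n)}
    {τ σ : Config n q} (h : condDist S Λ τ σ ≠ 0) : condWeight S Λ τ σ ≠ 0 := by
  intro h0
  exact h (by unfold condDist; rw [h0, zero_div])

lemma condWeight_ne_zero_agree {S : SpinSystem n q G} {Λ : Finset (Fin n)}
    {τ σ : Config n q} (h : condWeight S Λ τ σ ≠ 0) : ∀ v, v ∉ Λ → σ v = τ v := by
  by_contra hc
  apply h
  unfold condWeight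
  rw [if_neg hc, zero_mul, zero_mul]

lemma varD_nonneg {μ : Config n q → ℝ} (hμ : ∀ σ, 0 ≤ μ σ) (f : Config n q → ℝ) :
    0 ≤ varD μ f :=
  Finset.sum_nonneg fun σ _ => mul_nonneg (hμ σ) (sq_nonneg _)

lemma restrictDist_nonneg {μ : Config n q → ℝ} (hμ : ∀ σ, 0 ≤ μ σ)
    (T : Finset (Fin n)) (σ₀ : Config n q) : ∀ σ, 0 ≤ restrictDist μ T σ₀ σ := by
  intro σ
  unfold restrictDist
  refine div_nonneg ?_ (Finset.sum_nonneg fun σ' _ => hμ σ')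
  split
  · exact hμ σ
  · exact le_rfl

lemma restrict_support {μ : Config n q → ℝ} {T : Finset (Fin n)} {σ₀ σ : Config n q}
    (h : restrictDist μ T σ₀ σ ≠ 0) : μ σ ≠ 0 := by
  intro h0
  apply h
  unfold restrictDist
  rw [h0, ite_self, zero_div]

lemma avgCondVar_nonneg {μ : Config n q → ℝ} (hμ : ∀ σ, 0 ≤ μ σ)
    (Sfree : Finset (Fin n)) (f : Config n q → ℝ) : 0 ≤ avgCondVar μ Sfree f :=
  Finset.sum_nonneg fun σ _ => mul_nonneg (hμ σ)
    (varD_nonneg (restrictDist_nonneg hμ _ σ) f)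

lemma condWeight_univ_indep (S : SpinSystem n q G) (τ₁ τ₂ σ : Config n q) :
    condWeight S univ τ₁ σ = condWeight S univ τ₂ σ := by
  unfold condWeight
  rw [if_pos, if_pos] <;> exact fun v hv => absurd (Finset.mem_univ v) hv

lemma gibbsDist_eq_condDist (S : SpinSystem n q G) (τ : Config n q) :
    gibbsDist S = condDist S univ τ := by
  funext σ
  unfold gibbsDist condDist
  congr 1
  · exact condWeight_univ_indep S σ τ σ
  · exact Finset.sum_congr rfl fun σ' _ => condWeight_univ_indep S σ' τ σ'

lemma gibbsDist_nonneg (S : SpinSystem n q G) : ∀ σ, 0 ≤ gibbsDist S σ := fun σ =>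
  div_nonneg (condWeight_nonneg S univ σ σ)
    (Finset.sum_nonneg fun σ' _ => condWeight_nonneg S univ σ' σ')

lemma gibbs_ne_zero_weight {S : SpinSystem n q G} {σ : Config n q}
    (h : gibbsDist S σ ≠ 0) : condWeight S univ σ σ ≠ 0 := by
  intro h0
  exact h (by unfold gibbsDist; rw [h0, zero_div])

end Aux
section Aux2
variable {n q : ℕ} {G : SimpleGraph (Fin n)}

lemma restrict_condDist (S : SpinSystem n q G) (hpos : PosCondMass S)
    {Λ T : Finset (Fin n)} {τ σ₀ : Config n q}
    (hT : Λᶜ ⊆ T) (hτ : ∀ v, v ∉ Λ → σ₀ v = τ v)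
    (hfeas : condWeight S Λ τ σ₀ ≠ 0) :
    restrictDist (condDist S Λ τ) T σ₀ = condDist S (Λ \ T) σ₀ := by
  classical
  set K : ℝ := (∏ v ∈ Λ.filter (· ∈ T), S.b v (σ₀ v)) *
    ∏ p ∈ ((edgePairs G).filter (fun p => p.1 ∈ Λ ∨ p.2 ∈ Λ)).filter
        (fun p => ¬(p.1 ∈ Λ \ T ∨ p.2 ∈ Λ \ T)),
      S.A p.1 p.2 (σ₀ p.1) (σ₀ p.2) with hK
  -- the key factorization
  have hC1 : ∀ σ : Config n q,
      (if ∀ v ∈ T, σ v = σ₀ v then condWeight S Λ τ σ else 0)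
        = K * condWeight S (Λ \ T) σ₀ σ := by
    intro σ
    by_cases hI : ∀ v ∈ T, σ v = σ₀ v
    · rw [if_pos hI]
      have hind1 : ∀ v, v ∉ Λ → σ v = τ v := fun v hv => by
        rw [hI v (hT (Finset.mem_compl.mpr hv)), hτ v hv]
      have hout : ∀ v, v ∉ Λ \ T → σ v = σ₀ v := by
        intro v hv
        have hvT : v ∈ T := by
          by_cases hvΛ : v ∈ Λ
          · by_contra hvT
            exact hv (Finset.mem_sdiff.mpr ⟨hvΛ, hvT⟩)
          · exact hT (Finset.mem_compl.mpr hvΛ)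
        exact hI v hvT
      unfold condWeight
      rw [if_pos hind1, if_pos hout, one_mul, one_mul]
      have hb : ∏ v ∈ Λ, S.b v (σ v)
          = (∏ v ∈ Λ.filter (· ∈ T), S.b v (σ₀ v)) * ∏ v ∈ Λ \ T, S.b v (σ v) := by
        rw [← Finset.prod_filter_mul_prod_filter_not Λ (· ∈ T) (fun v => S.b v (σ v))]
        congr 1
        · exact Finset.prod_congr rfl fun v hv => by
            rw [hI v (Finset.mem_filter.mp hv).2]
        · congr 1
          rw [Finset.sdiff_eq_filter]
      have hE : ((edgePairs G).filter (fun p => p.1 ∈ Λ ∨ p.2 ∈ Λ)).filter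
            (fun p => p.1 ∈ Λ \ T ∨ p.2 ∈ Λ \ T)
          = (edgePairs G).filter (fun p => p.1 ∈ Λ \ T ∨ p.2 ∈ Λ \ T) := by
        rw [Finset.filter_filter]
        refine Finset.filter_congr fun p _ => ?_
        constructor
        · exact fun h => h.2
        · intro h
          refine ⟨?_, h⟩
          rcases h with h | h
          · exact Or.inl (Finset.mem_sdiff.mp h).1
          · exact Or.inr (Finset.mem_sdiff.mp h).1
      have hA : ∏ p ∈ (edgePairs G).filter (fun p => p.1 ∈ Λ ∨ p.2 ∈ Λ),
            S.A p.1 p.2 (σ p.1) (σ p.2)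
          = (∏ p ∈ (edgePairs G).filter (fun p => p.1 ∈ Λ \ T ∨ p.2 ∈ Λ \ T),
              S.A p.1 p.2 (σ p.1) (σ p.2)) *
            ∏ p ∈ ((edgePairs G).filter (fun p => p.1 ∈ Λ ∨ p.2 ∈ Λ)).filter
                (fun p => ¬(p.1 ∈ Λ \ T ∨ p.2 ∈ Λ \ T)),
              S.A p.1 p.2 (σ₀ p.1) (σ₀ p.2) := by
        rw [← Finset.prod_filter_mul_prod_filter_not
              ((edgePairs G).filter (fun p => p.1 ∈ Λ ∨ p.2 ∈ Λ))
              (fun p => p.1 ∈ Λ \ T ∨ p.2 ∈ Λ \ T)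
              (fun p => S.A p.1 p.2 (σ p.1) (σ p.2))]
        congr 1
        · rw [hE]
        · refine Finset.prod_congr rfl fun p hp => ?_
          have hp2 := (Finset.mem_filter.mp hp).2
          push_neg at hp2
          rw [hout _ hp2.1, hout _ hp2.2]
      rw [hb, hA, hK]
      ring
    · rw [if_neg hI]
      have hz : condWeight S (Λ \ T) σ₀ σ = 0 := by
        unfold condWeight
        rw [if_neg, zero_mul, zero_mul]
        push_neg at hI
        obtain ⟨v, hvT, hvne⟩ := hI
        intro hAll
        exact hvne (hAll v (fun h => (Finset.mem_sdiff.mp h).2 hvT))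
      rw [hz, mul_zero]
  -- K ≠ 0
  have hKne : K ≠ 0 := by
    have h0 := hfeas
    unfold condWeight at h0
    rw [if_pos hτ, one_mul] at h0
    obtain ⟨hb0, hA0⟩ := mul_ne_zero_iff.mp h0
    refine mul_ne_zero ?_ ?_
    · rw [Finset.prod_ne_zero_iff] at hb0 ⊢
      exact fun v hv => hb0 v (Finset.mem_filter.mp hv).1
    · rw [Finset.prod_ne_zero_iff] at hA0 ⊢
      exact fun p hp => hA0 p (Finset.filter_subset _ _ hp)
  have hZw : ∑ σ' : Config n q, condWeight S Λ τ σ' ≠ 0 := ne_of_gt (hpos Λ τ)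
  funext σ
  unfold restrictDist condDist
  have hnum : (if ∀ v ∈ T, σ v = σ₀ v then
        condWeight S Λ τ σ / ∑ σ' : Config n q, condWeight S Λ τ σ' else 0)
      = (K * condWeight S (Λ \ T) σ₀ σ) / ∑ σ' : Config n q, condWeight S Λ τ σ' := by
    rw [← hC1 σ]
    split
    · rfl
    · rw [zero_div]
  have hden : ∑ σ' ∈ univ.filter (fun σ' : Config n q => ∀ v ∈ T, σ' v = σ₀ v),
        condDist S Λ τ σ'
      = (K * ∑ σ' : Config n q, condWeight S (Λ \ T) σ₀ σ')
          / ∑ σ'' : Config n q, condWeight S Λ τ σ'' := by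
    unfold condDist
    rw [← Finset.sum_div]
    congr 1
    rw [Finset.sum_filter, Finset.mul_sum]
    exact Finset.sum_congr rfl fun σ' _ => hC1 σ'
  show (if ∀ v ∈ T, σ v = σ₀ v then
        condWeight S Λ τ σ / ∑ σ' : Config n q, condWeight S Λ τ σ' else 0) /
      (∑ σ' ∈ univ.filter (fun σ' : Config n q => ∀ v ∈ T, σ' v = σ₀ v),
        condDist S Λ τ σ') = _
  rw [hnum, hden, div_div_div_comm, div_self hZw, div_one,
      mul_div_mul_left _ _ hKne]

lemma sum_mul_restrict {μ : Config n q → ℝ} (hμ : ∀ σ, 0 ≤ μ σ)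
    (T : Finset (Fin n)) (τ : Config n q) :
    ∑ σ : Config n q, μ σ * restrictDist μ T σ τ = μ τ := by
  classical
  set Z : ℝ := ∑ σ' ∈ univ.filter (fun σ' : Config n q => ∀ v ∈ T, σ' v = τ v), μ σ' with hZ
  have hterm : ∀ σ : Config n q, μ σ * restrictDist μ T σ τ
      = (if ∀ v ∈ T, σ v = τ v then μ σ else 0) * (μ τ / Z) := by
    intro σ
    by_cases h : ∀ v ∈ T, σ v = τ v
    · rw [if_pos h]
      unfold restrictDist
      rw [if_pos (fun v hv => (h v hv).symm)]
      congr 2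
      rw [hZ]
      refine Finset.sum_congr (Finset.filter_congr fun σ' _ => ?_) fun _ _ => rfl
      constructor
      · exact fun h' v hv => by rw [h' v hv, h v hv]
      · exact fun h' v hv => by rw [h' v hv, h v hv]
    · rw [if_neg h, zero_mul]
      unfold restrictDist
      rw [if_neg, zero_div, mul_zero]
      intro h'
      exact h fun v hv => (h' v hv).symm
  rw [Finset.sum_congr rfl fun σ _ => hterm σ, ← Finset.sum_mul, ← Finset.sum_filter]
  by_cases hZ0 : Z = 0
  · have hτ0 : μ τ = 0 := by
      have hmem : τ ∈ univ.filter (fun σ' : Config n q => ∀ v ∈ T, σ' v = τ v) := by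
        simp
      have := Finset.single_le_sum (f := μ) (fun σ' _ => hμ σ') hmem
      rw [← hZ, hZ0] at this
      exact le_antisymm this (hμ τ)
    rw [← hZ, hZ0, hτ0, zero_div, mul_zero]
  · rw [← hZ, mul_div_cancel₀ _ hZ0]

end Aux2
section Aux3
variable {n q : ℕ} {G : SimpleGraph (Fin n)}

lemma restrict_gibbs (S : SpinSystem n q G) (hpos : PosCondMass S)
    (T : Finset (Fin n)) {σ : Config n q} (h0 : gibbsDist S σ ≠ 0) :
    restrictDist (gibbsDist S) T σ = condDist S Tᶜ σ := by
  rw [gibbsDist_eq_condDist S σ,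
    restrict_condDist S hpos (by rw [Finset.compl_univ]; exact Finset.empty_subset T)
      (fun v hv => absurd (Finset.mem_univ v) hv)
      (by
        rw [gibbsDist_eq_condDist S σ] at h0
        exact condDist_ne_zero_weight h0),
    ← Finset.compl_eq_univ_sdiff]

lemma condWeight_self_ne_zero {S : SpinSystem n q G} {σ : Config n q}
    (h : condWeight S univ σ σ ≠ 0) (Λ : Finset (Fin n)) :
    condWeight S Λ σ σ ≠ 0 := by
  unfold condWeight at h ⊢
  rw [if_pos (fun v _ => rfl), one_mul] at h ⊢
  obtain ⟨hb, hA⟩ := mul_ne_zero_iff.mp h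
  refine mul_ne_zero ?_ ?_
  · rw [Finset.prod_ne_zero_iff] at hb ⊢
    exact fun v _ => hb v (Finset.mem_univ v)
  · rw [Finset.prod_ne_zero_iff] at hA ⊢
    intro p hp
    exact hA p (Finset.mem_filter.mpr
      ⟨(Finset.mem_filter.mp hp).1, Or.inl (Finset.mem_univ _)⟩)

lemma avgCondVar_univ {μ : Config n q → ℝ} (h1 : ∑ σ : Config n q, μ σ = 1)
    (f : Config n q → ℝ) : avgCondVar μ univ f = varD μ f := by
  unfold avgCondVar
  have hres : ∀ σ₀ : Config n q, restrictDist μ univᶜ σ₀ = μ := by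
    intro σ₀
    funext σ
    unfold restrictDist
    rw [Finset.compl_univ, if_pos (fun v hv => absurd hv (Finset.notMem_empty v)),
      Finset.filter_true_of_mem (fun σ' _ => fun v hv => absurd hv (Finset.notMem_empty v)),
      h1, div_one]
  calc ∑ σ : Config n q, μ σ * varD (restrictDist μ univᶜ σ) f
      = ∑ σ : Config n q, μ σ * varD μ f := by
        exact Finset.sum_congr rfl fun σ _ => by rw [hres σ]
    _ = varD μ f := by rw [← Finset.sum_mul, h1, one_mul]

lemma varD_eq_zero_of_subsingleton {ν : Config n q → ℝ}
    (h1 : ∑ σ : Config n q, ν σ = 1)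
    (hsub : ∀ σ₁ σ₂ : Config n q, ν σ₁ ≠ 0 → ν σ₂ ≠ 0 → σ₁ = σ₂)
    (f : Config n q → ℝ) : varD ν f = 0 := by
  classical
  have hx : ∃ x : Config n q, ν x ≠ 0 := by
    by_contra h
    push_neg at h
    rw [Finset.sum_congr rfl fun σ _ => h σ, Finset.sum_const, smul_zero] at h1
    exact one_ne_zero h1.symm
  obtain ⟨x, hxne⟩ := hx
  have hother : ∀ σ : Config n q, σ ≠ x → ν σ = 0 := fun σ hne => by
    by_contra h
    exact hne (hsub σ x h hxne)
  have hνx : ν x = 1 := by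
    rw [← h1, Finset.sum_eq_single x (fun σ _ hne => hother σ hne)
      (fun h => absurd (Finset.mem_univ x) h)]
  have hE : (∑ σ : Config n q, ν σ * f σ) = f x := by
    rw [Finset.sum_eq_single x (fun σ _ hne => by rw [hother σ hne, zero_mul])
      (fun h => absurd (Finset.mem_univ x) h), hνx, one_mul]
  unfold varD expVal
  rw [Finset.sum_eq_single x (fun σ _ hne => by rw [hother σ hne, zero_mul])
    (fun h => absurd (Finset.mem_univ x) h)]
  show ν x * (f x - ∑ σ : Config n q, ν σ * f σ) ^ 2 = 0
  rw [hE]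
  simp

lemma subsingleton_of_var_zero {ν : Config n q → ℝ} (hnn : ∀ σ, 0 ≤ ν σ)
    (hz : ∀ g : Config n q → ℝ, varD ν g = 0) :
    ∀ σ₁ σ₂ : Config n q, ν σ₁ ≠ 0 → ν σ₂ ≠ 0 → σ₁ = σ₂ := by
  classical
  intro σ₁ σ₂ h1 h2
  by_contra hne
  set g : Config n q → ℝ := fun σ => if σ = σ₁ then 1 else 0 with hg
  have hE : expVal ν g = ν σ₁ := by
    unfold expVal
    rw [Finset.sum_eq_single σ₁ (fun σ _ hne' => by
        rw [hg]; simp [hne'])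
      (fun h => absurd (Finset.mem_univ σ₁) h)]
    rw [hg]; simp
  have hvz : (∑ σ : Config n q, ν σ * (g σ - expVal ν g) ^ 2) = 0 := hz g
  have hterm : ν σ₂ * (g σ₂ - expVal ν g) ^ 2 = 0 :=
    (Finset.sum_eq_zero_iff_of_nonneg
      (fun σ _ => mul_nonneg (hnn σ) (sq_nonneg (g σ - expVal ν g)))).mp hvz σ₂
      (Finset.mem_univ σ₂)
  rw [hE] at hterm
  have hgσ₂ : g σ₂ = 0 := by
    simp only [hg]
    rw [if_neg (fun h => hne h.symm)]
  rw [hgσ₂, zero_sub, neg_sq] at hterm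
  rcases mul_eq_zero.mp hterm with h | h
  · exact h2 h
  · exact h1 (pow_eq_zero_iff (by norm_num) |>.mp h)

end Aux3
section Aux4
variable {n q : ℕ} {G : SimpleGraph (Fin n)}

lemma comb_sum {k : ℕ} (m : ℕ) (g : Finset (Fin k) → ℝ) :
    ∑ R ∈ Finset.powersetCard m (univ : Finset (Fin k)), ∑ j ∈ univ \ R, g (insert j R)
      = ((m : ℝ) + 1) * ∑ R ∈ Finset.powersetCard (m+1) (univ : Finset (Fin k)), g R := by
  classical
  have h1 : ∑ R ∈ Finset.powersetCard (m+1) (univ : Finset (Fin k)), ∑ j ∈ R, g R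
      = ∑ R ∈ Finset.powersetCard m (univ : Finset (Fin k)), ∑ j ∈ univ \ R, g (insert j R) := by
    rw [Finset.sum_sigma', Finset.sum_sigma']
    refine Finset.sum_nbij' (fun p => ⟨p.1.erase p.2, p.2⟩) (fun p => ⟨insert p.2 p.1, p.2⟩)
      ?_ ?_ ?_ ?_ ?_
    · rintro ⟨R, j⟩ hp
      simp only [Finset.mem_sigma, Finset.mem_powersetCard] at hp ⊢
      obtain ⟨⟨hsub, hcard⟩, hj⟩ := hp
      refine ⟨⟨Finset.subset_univ _, ?_⟩, ?_⟩
      · rw [Finset.card_erase_of_mem hj, hcard]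
        rfl
      · exact Finset.mem_sdiff.mpr ⟨Finset.mem_univ _, Finset.notMem_erase _ _⟩
    · rintro ⟨R, j⟩ hp
      simp only [Finset.mem_sigma, Finset.mem_powersetCard] at hp ⊢
      obtain ⟨⟨hsub, hcard⟩, hj⟩ := hp
      have hjR : j ∉ R := (Finset.mem_sdiff.mp hj).2
      refine ⟨⟨Finset.subset_univ _, ?_⟩, Finset.mem_insert_self _ _⟩
      rw [Finset.card_insert_of_notMem hjR, hcard]
    · rintro ⟨R, j⟩ hp
      simp only [Finset.mem_sigma, Finset.mem_powersetCard] at hp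
      have hj := hp.2
      simp only [Sigma.mk.inj_iff, heq_eq_eq]
      exact ⟨Finset.insert_erase hj, trivial⟩
    · rintro ⟨R, j⟩ hp
      simp only [Finset.mem_sigma, Finset.mem_powersetCard] at hp
      have hjR : j ∉ R := (Finset.mem_sdiff.mp hp.2).2
      simp only [Sigma.mk.inj_iff, heq_eq_eq]
      exact ⟨Finset.erase_insert hjR, trivial⟩
    · rintro ⟨R, j⟩ hp
      simp only [Finset.mem_sigma, Finset.mem_powersetCard] at hp
      simp only []
      rw [Finset.insert_erase hp.2]
  rw [← h1]
  rw [Finset.mul_sum]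
  refine Finset.sum_congr rfl fun R hR => ?_
  rw [Finset.sum_const, nsmul_eq_mul, (Finset.mem_powersetCard.mp hR).2]
  push_cast
  ring

lemma sdiff_compl_eq {T T' : Finset (Fin n)} (h : T ⊆ T') : Tᶜ \ T' = T'ᶜ := by
  ext v
  simp only [Finset.mem_sdiff, Finset.mem_compl]
  exact ⟨fun hv => hv.2, fun hv => ⟨fun hvT => hv (h hvT), hv⟩⟩

lemma tower (S : SpinSystem n q G) (hpos : PosCondMass S)
    {T T' : Finset (Fin n)} (hTT' : T ⊆ T') (f : Config n q → ℝ) :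
    ∑ σ : Config n q, gibbsDist S σ * avgCondVar (condDist S Tᶜ σ) T'ᶜ f
      = avgCondVar (gibbsDist S) T'ᶜ f := by
  classical
  have hμ := gibbsDist_nonneg S
  have hterm : ∀ σ τ : Config n q,
      gibbsDist S σ * (condDist S Tᶜ σ τ * varD (restrictDist (condDist S Tᶜ σ) T' τ) f)
        = (gibbsDist S σ * condDist S Tᶜ σ τ) * varD (restrictDist (gibbsDist S) T' τ) f := by
    intro σ τ
    by_cases h1 : gibbsDist S σ = 0
    · rw [h1, zero_mul, zero_mul, zero_mul]
    by_cases h2 : condDist S Tᶜ σ τ = 0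
    · rw [h2]
      ring
    have hw2 : condWeight S Tᶜ σ τ ≠ 0 := condDist_ne_zero_weight h2
    have hagr : ∀ v, v ∉ Tᶜ → τ v = σ v := condWeight_ne_zero_agree hw2
    have hX : restrictDist (condDist S Tᶜ σ) T' τ = condDist S T'ᶜ τ := by
      rw [restrict_condDist S hpos (by rw [compl_compl]; exact hTT') hagr hw2,
        sdiff_compl_eq hTT']
    have hμτ : gibbsDist S τ ≠ 0 := by
      have hres : restrictDist (gibbsDist S) T σ = condDist S Tᶜ σ :=
        restrict_gibbs S hpos T h1
      have hle : gibbsDist S σ * restrictDist (gibbsDist S) T σ τ ≤ gibbsDist S τ := by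
        rw [← sum_mul_restrict hμ T τ]
        exact Finset.single_le_sum
          (fun σ' _ => mul_nonneg (hμ σ') (restrictDist_nonneg hμ T σ' τ)) (Finset.mem_univ σ)
      rw [hres] at hle
      have hgt : 0 < gibbsDist S σ * condDist S Tᶜ σ τ :=
        mul_pos (lt_of_le_of_ne (hμ σ) (Ne.symm h1))
          (lt_of_le_of_ne (condDist_nonneg S Tᶜ σ τ) (Ne.symm h2))
      exact ne_of_gt (lt_of_lt_of_le hgt hle)
    have hY : restrictDist (gibbsDist S) T' τ = condDist S T'ᶜ τ :=
      restrict_gibbs S hpos T' hμτ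
    rw [hX, hY]
    ring
  unfold avgCondVar
  simp only [compl_compl]
  calc ∑ σ : Config n q, gibbsDist S σ *
        ∑ τ : Config n q, condDist S Tᶜ σ τ * varD (restrictDist (condDist S Tᶜ σ) T' τ) f
      = ∑ σ : Config n q, ∑ τ : Config n q,
          (gibbsDist S σ * condDist S Tᶜ σ τ) * varD (restrictDist (gibbsDist S) T' τ) f := by
        refine Finset.sum_congr rfl fun σ _ => ?_
        rw [Finset.mul_sum]
        exact Finset.sum_congr rfl fun τ _ => hterm σ τ
    _ = ∑ τ : Config n q, (∑ σ : Config n q, gibbsDist S σ * condDist S Tᶜ σ τ) *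
          varD (restrictDist (gibbsDist S) T' τ) f := by
        rw [Finset.sum_comm]
        exact Finset.sum_congr rfl fun τ _ => (Finset.sum_mul _ _ _).symm
    _ = ∑ τ : Config n q, gibbsDist S τ * varD (restrictDist (gibbsDist S) T' τ) f := by
        refine Finset.sum_congr rfl fun τ _ => ?_
        congr 1
        have hconv : ∀ σ : Config n q, gibbsDist S σ * condDist S Tᶜ σ τ
            = gibbsDist S σ * restrictDist (gibbsDist S) T σ τ := by
          intro σ
          by_cases h1 : gibbsDist S σ = 0
          · rw [h1, zero_mul, zero_mul]
          · rw [restrict_gibbs S hpos T h1]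
        rw [Finset.sum_congr rfl fun σ _ => hconv σ, sum_mul_restrict hμ T τ]

end Aux4
section Main
variable {n q : ℕ}

lemma main_ind {G : SimpleGraph (Fin n)} (S : SpinSystem n q G)
    (hq : 2 ≤ q) (hpos : PosCondMass S)
    (k : ℕ) (U : Fin k → Finset (Fin n)) (ℓ : ℕ) (hℓ : ℓ < k) (γ : ℕ → ℝ)
    (hloc : ∀ r : ℕ, r < ℓ → ∀ R : Finset (Fin k), R.card = r →
      ∀ (τ : Config n q) (f : Config n q → ℝ),
        varD (condDist S (unionBlocks U R)ᶜ τ) f ≤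
          γ r / ((k : ℝ) - (r : ℝ)) *
            ∑ j ∈ (univ : Finset (Fin k)) \ R,
              avgCondVar (condDist S (unionBlocks U R)ᶜ τ)
                (unionBlocks U (insert j R))ᶜ f) :
    ∀ m, m ≤ ℓ → (∀ i, i < m → 0 ≤ γ i) → ∀ f : Config n q → ℝ,
      varD (gibbsDist S) f ≤
        (∏ i ∈ Finset.range m, γ i) / (k.choose m : ℝ) *
          ∑ R ∈ (univ : Finset (Fin k)).powersetCard m,
            avgCondVar (gibbsDist S) (unionBlocks U R)ᶜ f := by
  classical
  have hq0 : 0 < q := lt_of_lt_of_le two_pos hq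
  have hμ := gibbsDist_nonneg S
  have hsum1 : ∑ σ : Config n q, gibbsDist S σ = 1 := by
    rw [gibbsDist_eq_condDist S (fun _ => ⟨0, hq0⟩)]
    exact condDist_sum_one S hpos _ _
  intro m
  induction m with
  | zero =>
    intro _ _ f
    rw [Finset.range_zero, Finset.prod_empty, Nat.choose_zero_right, Nat.cast_one,
      Finset.powersetCard_zero, Finset.sum_singleton]
    have hUe : unionBlocks U (∅ : Finset (Fin k)) = ∅ := Finset.biUnion_empty
    rw [hUe, Finset.compl_empty, avgCondVar_univ hsum1 f, div_self one_ne_zero, one_mul]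
  | succ m ih =>
    intro hm1 hγ f
    have hmℓ : m ≤ ℓ := Nat.le_of_succ_le hm1
    have hmℓ' : m < ℓ := Nat.lt_of_succ_le hm1
    have hmk : m < k := lt_trans hmℓ' hℓ
    have hkm : (0:ℝ) < (k:ℝ) - (m:ℝ) := by
      rw [sub_pos]
      exact_mod_cast hmk
    -- per-R step bound
    have step : ∀ R ∈ (univ : Finset (Fin k)).powersetCard m,
        avgCondVar (gibbsDist S) (unionBlocks U R)ᶜ f ≤
          γ m / ((k:ℝ) - (m:ℝ)) *
            ∑ j ∈ (univ : Finset (Fin k)) \ R,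
              avgCondVar (gibbsDist S) (unionBlocks U (insert j R))ᶜ f := by
      intro R hR
      have hRc : R.card = m := (Finset.mem_powersetCard.mp hR).2
      have hLHS : avgCondVar (gibbsDist S) (unionBlocks U R)ᶜ f
          = ∑ σ : Config n q, gibbsDist S σ *
              varD (restrictDist (gibbsDist S) (unionBlocks U R) σ) f := by
        unfold avgCondVar
        simp only [compl_compl]
      rw [hLHS]
      have hbound : ∀ σ : Config n q,
          gibbsDist S σ * varD (restrictDist (gibbsDist S) (unionBlocks U R) σ) f
            ≤ gibbsDist S σ * (γ m / ((k:ℝ) - (m:ℝ)) *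
                ∑ j ∈ (univ : Finset (Fin k)) \ R,
                  avgCondVar (condDist S (unionBlocks U R)ᶜ σ)
                    (unionBlocks U (insert j R))ᶜ f) := by
        intro σ
        by_cases h0 : gibbsDist S σ = 0
        · rw [h0, zero_mul, zero_mul]
        · rw [restrict_gibbs S hpos (unionBlocks U R) h0]
          exact mul_le_mul_of_nonneg_left (hloc m hmℓ' R hRc σ f) (hμ σ)
      calc ∑ σ : Config n q, gibbsDist S σ *
            varD (restrictDist (gibbsDist S) (unionBlocks U R) σ) f
          ≤ ∑ σ : Config n q, gibbsDist S σ * (γ m / ((k:ℝ) - (m:ℝ)) *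
              ∑ j ∈ (univ : Finset (Fin k)) \ R,
                avgCondVar (condDist S (unionBlocks U R)ᶜ σ)
                  (unionBlocks U (insert j R))ᶜ f) :=
            Finset.sum_le_sum fun σ _ => hbound σ
        _ = γ m / ((k:ℝ) - (m:ℝ)) * ∑ j ∈ (univ : Finset (Fin k)) \ R,
              ∑ σ : Config n q, gibbsDist S σ *
                avgCondVar (condDist S (unionBlocks U R)ᶜ σ)
                  (unionBlocks U (insert j R))ᶜ f := by
            simp only [Finset.mul_sum]
            rw [Finset.sum_comm]
            exact Finset.sum_congr rfl fun j _ => Finset.sum_congr rfl fun σ _ => by ring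
        _ = γ m / ((k:ℝ) - (m:ℝ)) * ∑ j ∈ (univ : Finset (Fin k)) \ R,
              avgCondVar (gibbsDist S) (unionBlocks U (insert j R))ᶜ f := by
            congr 1
            refine Finset.sum_congr rfl fun j hj => ?_
            exact tower S hpos
              (Finset.biUnion_subset_biUnion_of_subset_left U (Finset.subset_insert j R)) f
    -- sum the per-R bounds
    have hsum : ∑ R ∈ (univ : Finset (Fin k)).powersetCard m,
          avgCondVar (gibbsDist S) (unionBlocks U R)ᶜ f
        ≤ γ m / ((k:ℝ) - (m:ℝ)) * (((m:ℝ) + 1) *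
            ∑ R ∈ (univ : Finset (Fin k)).powersetCard (m+1),
              avgCondVar (gibbsDist S) (unionBlocks U R)ᶜ f) := by
      calc ∑ R ∈ (univ : Finset (Fin k)).powersetCard m,
            avgCondVar (gibbsDist S) (unionBlocks U R)ᶜ f
          ≤ ∑ R ∈ (univ : Finset (Fin k)).powersetCard m,
              (γ m / ((k:ℝ) - (m:ℝ)) * ∑ j ∈ (univ : Finset (Fin k)) \ R,
                avgCondVar (gibbsDist S) (unionBlocks U (insert j R))ᶜ f) :=
            Finset.sum_le_sum step
        _ = γ m / ((k:ℝ) - (m:ℝ)) * ∑ R ∈ (univ : Finset (Fin k)).powersetCard m,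
              ∑ j ∈ (univ : Finset (Fin k)) \ R,
                avgCondVar (gibbsDist S) (unionBlocks U (insert j R))ᶜ f :=
            (Finset.mul_sum _ _ _).symm
        _ = γ m / ((k:ℝ) - (m:ℝ)) * (((m:ℝ) + 1) *
              ∑ R ∈ (univ : Finset (Fin k)).powersetCard (m+1),
                avgCondVar (gibbsDist S) (unionBlocks U R)ᶜ f) := by
            rw [comb_sum m (fun R => avgCondVar (gibbsDist S) (unionBlocks U R)ᶜ f)]
    have hcm : (0:ℝ) ≤ (∏ i ∈ Finset.range m, γ i) / (k.choose m : ℝ) :=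
      div_nonneg (Finset.prod_nonneg fun i hi =>
        hγ i (lt_trans (Finset.mem_range.mp hi) (Nat.lt_succ_self m))) (Nat.cast_nonneg _)
    calc varD (gibbsDist S) f
        ≤ (∏ i ∈ Finset.range m, γ i) / (k.choose m : ℝ) *
            ∑ R ∈ (univ : Finset (Fin k)).powersetCard m,
              avgCondVar (gibbsDist S) (unionBlocks U R)ᶜ f :=
          ih hmℓ (fun i hi => hγ i (lt_trans hi (Nat.lt_succ_self m))) f
      _ ≤ (∏ i ∈ Finset.range m, γ i) / (k.choose m : ℝ) *
            (γ m / ((k:ℝ) - (m:ℝ)) * (((m:ℝ) + 1) *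
              ∑ R ∈ (univ : Finset (Fin k)).powersetCard (m+1),
                avgCondVar (gibbsDist S) (unionBlocks U R)ᶜ f)) :=
          mul_le_mul_of_nonneg_left hsum hcm
      _ = (∏ i ∈ Finset.range (m+1), γ i) / (k.choose (m+1) : ℝ) *
            ∑ R ∈ (univ : Finset (Fin k)).powersetCard (m+1),
              avgCondVar (gibbsDist S) (unionBlocks U R)ᶜ f := by
          rw [Finset.prod_range_succ]
          have hCm : (k.choose m : ℝ) ≠ 0 :=
            (Nat.cast_pos.mpr (Nat.choose_pos hmk.le)).ne'
          have hCm1 : (k.choose (m+1) : ℝ) ≠ 0 :=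
            (Nat.cast_pos.mpr (Nat.choose_pos (Nat.succ_le_of_lt hmk))).ne'
          have hid : (k.choose (m+1) : ℝ) * ((m:ℝ)+1) = (k.choose m : ℝ) * ((k:ℝ) - m) := by
            calc (k.choose (m+1) : ℝ) * ((m:ℝ)+1)
                = ((k.choose (m+1) * (m+1) : ℕ) : ℝ) := by push_cast; ring
              _ = ((k.choose m * (k - m) : ℕ) : ℝ) := by rw [Nat.choose_succ_right_eq]
              _ = (k.choose m : ℝ) * ((k:ℝ) - m) := by
                  push_cast [Nat.cast_sub hmk.le]; ring
          have h2 : ((m:ℝ)+1) / ((k.choose m : ℝ) * ((k:ℝ) - m)) = 1 / (k.choose (m+1) : ℝ) := by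
            rw [div_eq_div_iff (mul_ne_zero hCm hkm.ne') hCm1]
            linear_combination hid
          rw [← div_div] at h2
          calc (∏ i ∈ Finset.range m, γ i) / (k.choose m : ℝ) *
                (γ m / ((k:ℝ) - (m:ℝ)) * (((m:ℝ) + 1) *
                  ∑ R ∈ (univ : Finset (Fin k)).powersetCard (m+1),
                    avgCondVar (gibbsDist S) (unionBlocks U R)ᶜ f))
              = (∏ i ∈ Finset.range m, γ i) * γ m *
                  (∑ R ∈ (univ : Finset (Fin k)).powersetCard (m+1),
                    avgCondVar (gibbsDist S) (unionBlocks U R)ᶜ f) *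
                  (((m:ℝ)+1) / (k.choose m : ℝ) / ((k:ℝ) - m)) := by ring
            _ = (∏ i ∈ Finset.range m, γ i) * γ m *
                  (∑ R ∈ (univ : Finset (Fin k)).powersetCard (m+1),
                    avgCondVar (gibbsDist S) (unionBlocks U R)ᶜ f) *
                  (1 / (k.choose (m+1) : ℝ)) := by rw [h2]
            _ = (∏ i ∈ Finset.range m, γ i) * γ m / (k.choose (m+1) : ℝ) *
                  ∑ R ∈ (univ : Finset (Fin k)).powersetCard (m+1),
                    avgCondVar (gibbsDist S) (unionBlocks U R)ᶜ f := by ring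
end Main

/-- Proposition 5.1: local-to-global.
If for every `0 ≤ r ≤ ℓ−1`, every `R ⊆ [k]` with `|R| = r` and every pinning
`τ` on `U_R` the `(k−r) ↔ 1` down-up walk on `μ^τ` has relaxation time at most
`γ_r` (expressed by the variance inequality), then the `k ↔ ℓ` down-up walk
satisfies `T_rel(k,ℓ) ≤ ∏_{i<ℓ} γ_i` (expressed by the corresponding variance
inequality for `μ`). -/
theorem statement4 {n q : ℕ} (G : SimpleGraph (Fin n)) (S : SpinSystem n q G)
    (hq : 2 ≤ q) (hpos : PosCondMass S)
    (k : ℕ) (U : Fin k → Finset (Fin n)) (hU : IsPartition U)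
    (ℓ : ℕ) (hℓ : ℓ < k) (γ : ℕ → ℝ)
    (hloc : ∀ r : ℕ, r < ℓ → ∀ R : Finset (Fin k), R.card = r →
      ∀ (τ : Config n q) (f : Config n q → ℝ),
        varD (condDist S (unionBlocks U R)ᶜ τ) f ≤
          γ r / ((k : ℝ) - (r : ℝ)) *
            ∑ j ∈ (univ : Finset (Fin k)) \ R,
              avgCondVar (condDist S (unionBlocks U R)ᶜ τ)
                (unionBlocks U (insert j R))ᶜ f) :
    ∀ f : Config n q → ℝ,
      varD (gibbsDist S) f ≤
        (∏ i ∈ Finset.range ℓ, γ i) / (k.choose ℓ : ℝ) *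
          ∑ R ∈ (univ : Finset (Fin k)).powersetCard ℓ,
            avgCondVar (gibbsDist S) (unionBlocks U R)ᶜ f := by
  classical
  intro f
  have hq0 : 0 < q := lt_of_lt_of_le two_pos hq
  have hμ := gibbsDist_nonneg S
  by_cases hall : ∀ i, i < ℓ → 0 ≤ γ i
  · exact main_ind S hq hpos k U ℓ hℓ γ hloc ℓ le_rfl hall f
  · push_neg at hall
    have hex : ∃ i, i < ℓ ∧ γ i < 0 := by
      obtain ⟨i₀, hi₀, hγi₀⟩ := hall
      exact ⟨i₀, hi₀, hγi₀⟩
    set r := Nat.find hex with hrdef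
    obtain ⟨hrℓ, hγr⟩ := Nat.find_spec hex
    have hmin : ∀ i, i < r → 0 ≤ γ i := by
      intro i hi
      by_contra hneg
      push_neg at hneg
      exact Nat.find_min hex hi ⟨lt_trans (hrdef ▸ hi) hrℓ, hneg⟩
    have hrk : (r : ℝ) < (k : ℝ) := by exact_mod_cast lt_trans hrℓ hℓ
    -- all level-r conditional variances vanish
    have hzero : ∀ (R : Finset (Fin k)), R.card = r → ∀ (τ : Config n q)
        (g : Config n q → ℝ), varD (condDist S (unionBlocks U R)ᶜ τ) g = 0 := by
      intro R hRc τ g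
      refine le_antisymm ?_ (varD_nonneg (condDist_nonneg S _ τ) g)
      refine le_trans (hloc r hrℓ R hRc τ g) ?_
      have h1 : γ r / ((k : ℝ) - (r : ℝ)) ≤ 0 :=
        div_nonpos_of_nonpos_of_nonneg hγr.le (by linarith)
      have h2 : (0:ℝ) ≤ ∑ j ∈ (univ : Finset (Fin k)) \ R,
          avgCondVar (condDist S (unionBlocks U R)ᶜ τ) (unionBlocks U (insert j R))ᶜ g :=
        Finset.sum_nonneg fun j _ =>
          avgCondVar_nonneg (condDist_nonneg S _ τ) _ g
      exact mul_nonpos_iff.mpr (Or.inr ⟨h1, h2⟩)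
    -- Var_μ f = 0
    have hVar0 : varD (gibbsDist S) f = 0 := by
      refine le_antisymm ?_ (varD_nonneg hμ f)
      have hmain := main_ind S hq hpos k U ℓ hℓ γ hloc r (le_of_lt hrℓ) hmin f
      have hS0 : ∑ R ∈ (univ : Finset (Fin k)).powersetCard r,
          avgCondVar (gibbsDist S) (unionBlocks U R)ᶜ f = 0 := by
        refine Finset.sum_eq_zero fun R hR => ?_
        have hRc : R.card = r := (Finset.mem_powersetCard.mp hR).2
        unfold avgCondVar
        simp only [compl_compl]
        refine Finset.sum_eq_zero fun σ _ => ?_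
        by_cases h0 : gibbsDist S σ = 0
        · rw [h0, zero_mul]
        · rw [restrict_gibbs S hpos (unionBlocks U R) h0, hzero R hRc σ f, mul_zero]
      rw [hS0, mul_zero] at hmain
      exact hmain
    -- all level-ℓ terms vanish
    have hSl : ∑ R ∈ (univ : Finset (Fin k)).powersetCard ℓ,
        avgCondVar (gibbsDist S) (unionBlocks U R)ᶜ f = 0 := by
      refine Finset.sum_eq_zero fun R hR => ?_
      have hRc : R.card = ℓ := (Finset.mem_powersetCard.mp hR).2
      obtain ⟨R₀, hR₀sub, hR₀c⟩ :=
        Finset.exists_subset_card_eq (s := R) (n := r) (by rw [hRc]; exact le_of_lt hrℓ)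
      have hUsub : unionBlocks U R₀ ⊆ unionBlocks U R :=
        Finset.biUnion_subset_biUnion_of_subset_left U hR₀sub
      unfold avgCondVar
      simp only [compl_compl]
      refine Finset.sum_eq_zero fun σ _ => ?_
      by_cases h0 : gibbsDist S σ = 0
      · rw [h0, zero_mul]
      rw [restrict_gibbs S hpos (unionBlocks U R) h0]
      have hwσ : condWeight S univ σ σ ≠ 0 := gibbs_ne_zero_weight h0
      have hfeas : condWeight S (unionBlocks U R₀)ᶜ σ σ ≠ 0 :=
        condWeight_self_ne_zero hwσ _
      have hres : restrictDist (condDist S (unionBlocks U R₀)ᶜ σ) (unionBlocks U R) σ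
          = condDist S (unionBlocks U R)ᶜ σ := by
        rw [restrict_condDist S hpos (by rw [compl_compl]; exact hUsub)
          (fun v _ => rfl) hfeas, sdiff_compl_eq hUsub]
      have hsub := subsingleton_of_var_zero (condDist_nonneg S (unionBlocks U R₀)ᶜ σ)
        (hzero R₀ hR₀c σ)
      have hsub' : ∀ σ₁ σ₂ : Config n q, condDist S (unionBlocks U R)ᶜ σ σ₁ ≠ 0 →
          condDist S (unionBlocks U R)ᶜ σ σ₂ ≠ 0 → σ₁ = σ₂ := by
        intro σ₁ σ₂ h₁ h₂
        rw [← hres] at h₁ h₂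
        exact hsub σ₁ σ₂ (restrict_support h₁) (restrict_support h₂)
      rw [varD_eq_zero_of_subsingleton (condDist_sum_one S hpos _ σ) hsub' f, mul_zero]
    rw [hVar0, hSl, mul_zero]


end Paper
end

section
/- Let G = (V_L ⊎ V_R, E) be a bipartite graph with maximum left degree Δ_L ≥ 1 and maximum right degree Δ_R, let n_L = |V_L|, let α ∈ (0, 1/2) with α·n_L ≥ 1, and let ℓ = ⌈α·n_L⌉. Sample a subset S uniformly at random among all subsets of V_L of size ℓ, and for a vertex v ∈ V_L ∪ V_R let S_v be the vertex set of the connected component of v in the induced subgraph G[S ∪ V_R] (with S_v = ∅ if v ∉ S ∪ V_R). Then for every k ≥ 1, Pr[|S_v| ≥ k] ≤ (e·(Δ_L + Δ_R))^k · (2α)^{(k−1)/Δ_L}. -/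
open Finset
open scoped BigOperators Classical

namespace Paper

variable {n q k : ℕ}

/-! ### Auxiliary machinery for Statement 16 -/

/-- Pick the minimum of a finset of naturals (0 if empty). -/
noncomputable def pick (s : Finset ℕ) : ℕ := if h : s.Nonempty then s.min' h else 0

lemma pick_mem {s : Finset ℕ} (h : s.Nonempty) : pick s ∈ s := by
  rw [pick, dif_pos h]; exact s.min'_mem h

lemma pick_le {s : Finset ℕ} {x : ℕ} (hx : x ∈ s) : pick s ≤ x := by
  rw [pick, dif_pos ⟨x, hx⟩]; exact s.min'_le x hx

/-- The `i`-th neighbour of `u` (default `v`). -/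
noncomputable def nbr {n : ℕ} (G : SimpleGraph (Fin n)) (v u : Fin n) (i : ℕ) : Fin n :=
  ((univ.filter (fun w => G.Adj u w)).sort (· ≤ ·)).getD i v

/-- Decode a code `c` into a vertex, relative to the list `L` of visited vertices. -/
noncomputable def nxt {n : ℕ} (G : SimpleGraph (Fin n)) (v : Fin n) (D : ℕ)
    (L : List (Fin n)) (c : ℕ) : Fin n :=
  nbr G v (L.getD (c / D) v) (c % D)

/-- Valid codes: those pointing to a fresh vertex of `C`. -/
noncomputable def cands {n : ℕ} (G : SimpleGraph (Fin n)) (v : Fin n) (D : ℕ)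
    (C : Finset (Fin n)) (L : List (Fin n)) : Finset ℕ :=
  (Finset.range (L.length * D)).filter (fun c => nxt G v D L c ∈ C ∧ nxt G v D L c ∉ L)

/-- Greedy exploration of `C` starting at `v`, recording visited vertices and codes. -/
noncomputable def exploreP {n : ℕ} (G : SimpleGraph (Fin n)) (v : Fin n) (D : ℕ)
    (C : Finset (Fin n)) : ℕ → List (Fin n) × List ℕ
  | 0 => ([v], [])
  | j+1 =>
      let s := exploreP G v D C j
      let c := pick (cands G v D C s.1)
      (s.1 ++ [nxt G v D s.1 c], s.2 ++ [c])

/-- Reconstruction of the exploration from the set of codes alone. -/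
noncomputable def decodeP {n : ℕ} (G : SimpleGraph (Fin n)) (v : Fin n) (D : ℕ)
    (P : Finset ℕ) : ℕ → List (Fin n) × List ℕ
  | 0 => ([v], [])
  | j+1 =>
      let s := decodeP G v D P j
      let c := pick ((P \ s.2.toFinset).filter (fun c => c / D < s.1.length))
      (s.1 ++ [nxt G v D s.1 c], s.2 ++ [c])

section Explore

variable {n : ℕ} (G : SimpleGraph (Fin n)) (v : Fin n) (D : ℕ) (C : Finset (Fin n))

lemma explore_len1 : ∀ j, (exploreP G v D C j).1.length = j + 1
  | 0 => rfl
  | j+1 => by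
      simp [exploreP, explore_len1 j]

lemma explore_len2 : ∀ j, (exploreP G v D C j).2.length = j
  | 0 => rfl
  | j+1 => by
      simp [exploreP, explore_len2 j]

lemma explore_fst_prefix : ∀ {j j'}, j ≤ j' →
    (exploreP G v D C j).1 <+: (exploreP G v D C j').1 := by
  intro j j' h
  induction j' with
  | zero => cases Nat.le_zero.mp h; exact List.prefix_refl _
  | succ j' ih =>
      rcases Nat.lt_or_ge j (j'+1) with h' | h'
      · exact (ih (Nat.lt_succ_iff.mp h')).trans ⟨_, rfl⟩
      · cases le_antisymm h h'; exact List.prefix_refl _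

lemma explore_snd_prefix : ∀ {j j'}, j ≤ j' →
    (exploreP G v D C j).2 <+: (exploreP G v D C j').2 := by
  intro j j' h
  induction j' with
  | zero => cases Nat.le_zero.mp h; exact List.prefix_refl _
  | succ j' ih =>
      rcases Nat.lt_or_ge j (j'+1) with h' | h'
      · exact (ih (Nat.lt_succ_iff.mp h')).trans ⟨_, rfl⟩
      · cases le_antisymm h h'; exact List.prefix_refl _

lemma getD_of_prefix {α : Type*} {L L' : List α} (h : L <+: L') (d : α) {i : ℕ}
    (hi : i < L.length) : L'.getD i d = L.getD i d := by
  rcases h with ⟨t, rfl⟩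
  exact List.getD_append _ _ _ _ hi

lemma explore_fst_getD {j j' : ℕ} (h : j ≤ j') {i : ℕ} (hi : i < j + 1) :
    (exploreP G v D C j').1.getD i v = (exploreP G v D C j).1.getD i v :=
  getD_of_prefix (explore_fst_prefix G v D C h) v (by rw [explore_len1]; exact hi)

lemma explore_snd_getD {j j' : ℕ} (h : j ≤ j') {i : ℕ} (hi : i < j) :
    (exploreP G v D C j').2.getD i 0 = (exploreP G v D C j).2.getD i 0 :=
  getD_of_prefix (explore_snd_prefix G v D C h) 0 (by rw [explore_len2]; exact hi)

/-- The code chosen at step `i` as recorded in the final code list. -/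
lemma explore_code_eq {i j : ℕ} (hij : i < j) :
    (exploreP G v D C j).2.getD i 0 = pick (cands G v D C (exploreP G v D C i).1) := by
  have h1 : (exploreP G v D C j).2.getD i 0 = (exploreP G v D C (i+1)).2.getD i 0 :=
    explore_snd_getD G v D C hij (Nat.lt_succ_self i)
  rw [h1]
  show ((exploreP G v D C i).2 ++ [pick (cands G v D C (exploreP G v D C i).1)]).getD i 0 = _
  rw [List.getD_eq_getElem?_getD, List.getElem?_append_right (by rw [explore_len2])]
  simp [explore_len2]

/-- The vertex added at step `i`. -/
lemma explore_elem_eq {i j : ℕ} (hij : i < j) :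
    (exploreP G v D C j).1.getD (i+1) v =
      nxt G v D (exploreP G v D C i).1 ((exploreP G v D C j).2.getD i 0) := by
  rw [explore_code_eq G v D C hij]
  have h1 : (exploreP G v D C j).1.getD (i+1) v = (exploreP G v D C (i+1)).1.getD (i+1) v :=
    explore_fst_getD G v D C hij (by omega)
  rw [h1]
  show ((exploreP G v D C i).1 ++ [nxt G v D (exploreP G v D C i).1 _]).getD (i+1) v = _
  rw [List.getD_eq_getElem?_getD, List.getElem?_append_right (by rw [explore_len1])]
  simp [explore_len1]

end Explore



/-- Invariants of the exploration. -/
structure GoodE {n : ℕ} (G : SimpleGraph (Fin n)) (v : Fin n) (D : ℕ) (C : Finset (Fin n))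
    (j : ℕ) : Prop where
  nd : (exploreP G v D C j).1.Nodup
  mem : ∀ x ∈ (exploreP G v D C j).1, x ∈ C
  code : ∀ i, i < j → (exploreP G v D C j).2.getD i 0 ∈ cands G v D C (exploreP G v D C i).1

section Invariants

variable {n : ℕ} {G : SimpleGraph (Fin n)} {v : Fin n} {D : ℕ} {C : Finset (Fin n)}

lemma getD_mem_of_lt {α : Type*} {L : List α} {i : ℕ} (h : i < L.length) (d : α) :
    L.getD i d ∈ L := by
  rw [List.getD_eq_getElem L d h]; exact List.getElem_mem h

lemma v_mem_explore (j : ℕ) : v ∈ (exploreP G v D C j).1 := by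
  have h0 : (exploreP G v D C j).1.getD 0 v = v := by
    have := explore_fst_getD G v D C (Nat.zero_le j) (i := 0) (by omega)
    simpa [exploreP] using this
  have hm := getD_mem_of_lt (L := (exploreP G v D C j).1) (i := 0)
    (by rw [explore_len1 G v D C]; omega) v
  rwa [h0] at hm

lemma code_div_lt {i j : ℕ} (hD : 1 ≤ D) (g : GoodE G v D C j) (hij : i < j) :
    (exploreP G v D C j).2.getD i 0 / D < i + 1 := by
  have h := g.code i hij
  rw [cands, Finset.mem_filter, Finset.mem_range, explore_len1] at h
  exact (Nat.div_lt_iff_lt_mul hD).mpr h.1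

lemma nxt_stable {i j : ℕ} (hij : i ≤ j) {c : ℕ} (hc : c / D < i + 1) :
    nxt G v D (exploreP G v D C j).1 c = nxt G v D (exploreP G v D C i).1 c := by
  unfold nxt
  rw [explore_fst_getD G v D C hij hc]

/-- Distinct steps record distinct codes. -/
lemma code_ne {i i' m : ℕ} (hD : 1 ≤ D) (g : GoodE G v D C m) (hii' : i < i') (him : i' < m) :
    (exploreP G v D C m).2.getD i 0 ≠ (exploreP G v D C m).2.getD i' 0 := by
  intro heq
  have hc' := g.code i' him
  rw [cands, Finset.mem_filter] at hc'
  apply hc'.2.2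
  have hdiv : (exploreP G v D C m).2.getD i 0 / D < i + 1 :=
    code_div_lt hD g (hii'.trans him)
  rw [← heq, nxt_stable (le_of_lt hii') hdiv,
    ← explore_elem_eq G v D C (hii'.trans him),
    explore_fst_getD G v D C (le_of_lt him) (i := i + 1) (by omega)]
  exact getD_mem_of_lt (L := (exploreP G v D C i').1) (i := i + 1) (by rw [explore_len1 G v D C]; omega) v

variable (hD : 1 ≤ D)
  (hdeg : ∀ u : Fin n, (univ.filter (fun w => G.Adj u w)).card ≤ D)
  (hvC : v ∈ C)
  (hcross : ∀ Lf : Finset (Fin n), v ∈ Lf → ↑Lf ⊆ (C : Set (Fin n)) → Lf.card < C.card →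
      ∃ u ∈ Lf, ∃ w, w ∈ C ∧ w ∉ Lf ∧ G.Adj u w)

include hD hdeg hcross in
lemma cands_nonempty {j : ℕ} (g : GoodE G v D C j) (hj : j + 1 < C.card) :
    (cands G v D C (exploreP G v D C j).1).Nonempty := by
  set L := (exploreP G v D C j).1 with hL
  have hcard : L.toFinset.card = j + 1 := by
    rw [List.toFinset_card_of_nodup g.nd, explore_len1 G v D C]
  obtain ⟨u, hu, w, hwC, hwL, hadj⟩ :=
    hcross L.toFinset (by rw [List.mem_toFinset]; exact v_mem_explore j)
      (by intro x hx; exact g.mem x (by simpa using hx)) (by omega)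
  rw [List.mem_toFinset] at hu
  obtain ⟨r, hr, hur⟩ := List.mem_iff_getElem.mp hu
  have hwsort : w ∈ (univ.filter (fun z => G.Adj u z)).sort (· ≤ ·) := by
    rw [Finset.mem_sort, Finset.mem_filter]
    exact ⟨Finset.mem_univ w, hadj⟩
  obtain ⟨i, hi, hwi⟩ := List.mem_iff_getElem.mp hwsort
  have hiD : i < D := lt_of_lt_of_le (by simpa [Finset.length_sort] using hi) (hdeg u)
  refine ⟨i + D * r, ?_⟩
  have hdiv : (i + D * r) / D = r := by
    rw [Nat.add_mul_div_left _ _ hD, Nat.div_eq_of_lt hiD, Nat.zero_add]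
  have hmod : (i + D * r) % D = i := by
    rw [Nat.add_mul_mod_self_left, Nat.mod_eq_of_lt hiD]
  have hnxt : nxt G v D L (i + D * r) = w := by
    rw [nxt, hdiv, hmod, List.getD_eq_getElem L v hr, hur, nbr,
      List.getD_eq_getElem _ v hi, hwi]
  rw [cands, Finset.mem_filter, Finset.mem_range, hnxt]
  refine ⟨?_, hwC, by rwa [List.mem_toFinset] at hwL⟩
  calc i + D * r < D + D * r := by omega
  _ = (r + 1) * D := by ring
  _ ≤ L.length * D := Nat.mul_le_mul_right D (by omega)

include hD hdeg hvC hcross in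
lemma goodE : ∀ j, j + 1 ≤ C.card → GoodE G v D C j := by
  intro j
  induction j with
  | zero =>
      intro _
      refine ⟨by simp [exploreP], ?_, by omega⟩
      intro x hx
      simp only [exploreP, List.mem_singleton] at hx
      rwa [hx]
  | succ j ih =>
      intro hj
      have g := ih (by omega)
      have hne : (cands G v D C (exploreP G v D C j).1).Nonempty :=
        cands_nonempty hD hdeg hcross g (by omega)
      have hcmem := pick_mem hne
      rw [cands, Finset.mem_filter] at hcmem
      constructor
      · show ((exploreP G v D C j).1 ++ [_]).Nodup
        rw [List.nodup_append]
        exact ⟨g.nd, List.nodup_singleton _, by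
          intro a ha b hb hab
          rw [List.mem_singleton] at hb
          exact hcmem.2.2 (hb ▸ hab ▸ ha)⟩
      · intro x hx
        rcases List.mem_append.mp hx with h | h
        · exact g.mem x h
        · rw [List.mem_singleton] at h
          rw [h]; exact hcmem.2.1
      · intro i hi
        rcases Nat.lt_or_ge i j with h | h
        · rw [explore_snd_getD G v D C (Nat.le_succ j) h]
          exact g.code i h
        · have : i = j := by omega
          subst this
          rw [explore_code_eq G v D C (Nat.lt_succ_self i)]
          exact pick_mem hne

end Invariants



section Decode

variable {n : ℕ} {G : SimpleGraph (Fin n)} {v : Fin n} {D : ℕ} {C : Finset (Fin n)}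

variable (hD : 1 ≤ D)
  (hdeg : ∀ u : Fin n, (univ.filter (fun w => G.Adj u w)).card ≤ D)
  (hvC : v ∈ C)
  (hcross : ∀ Lf : Finset (Fin n), v ∈ Lf → ↑Lf ⊆ (C : Set (Fin n)) → Lf.card < C.card →
      ∃ u ∈ Lf, ∃ w, w ∈ C ∧ w ∉ Lf ∧ G.Adj u w)

include hD hdeg hvC hcross in
/-- The exploration can be reconstructed from its set of codes. -/
lemma decode_eq {m : ℕ} (hm : m + 1 ≤ C.card) :
    ∀ j, j ≤ m → decodeP G v D ((exploreP G v D C m).2.toFinset) j = exploreP G v D C j := by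
  have gm := goodE hD hdeg hvC hcross m hm
  intro j
  induction j with
  | zero => intro _; rfl
  | succ j IH =>
      intro hjm
      have IH' := IH (by omega)
      have gj := goodE hD hdeg hvC hcross j (by omega)
      set P := (exploreP G v D C m).2.toFinset with hP
      set L := (exploreP G v D C j).1 with hL
      set cs := (exploreP G v D C j).2 with hcs
      set Q := (P \ cs.toFinset).filter (fun c => c / D < L.length) with hQ
      have hlenm : (exploreP G v D C m).2.length = m := explore_len2 G v D C m
      have hlenLm : (exploreP G v D C m).1.length = m + 1 := explore_len1 G v D C m
      have hlenL : L.length = j + 1 := explore_len1 G v D C j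
      have hlencs : cs.length = j := explore_len2 G v D C j
      have hcstar : (exploreP G v D C m).2.getD j 0 = pick (cands G v D C L) :=
        explore_code_eq G v D C (by omega)
      set cstar := (exploreP G v D C m).2.getD j 0 with hcst
      -- `cstar ∈ Q`
      have hc1 : cstar ∈ P := by
        rw [hP, List.mem_toFinset]
        exact getD_mem_of_lt (by omega) 0
      have hc2 : cstar ∉ cs.toFinset := by
        rw [List.mem_toFinset]
        intro hmem
        obtain ⟨i, hi, hgi⟩ := List.mem_iff_getElem.mp hmem
        have hij : i < j := by omega
        have : (exploreP G v D C m).2.getD i 0 = cstar := by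
          rw [explore_snd_getD G v D C (by omega : j ≤ m) hij]
          show cs.getD i 0 = cstar
          rw [List.getD_eq_getElem _ 0 hi]
          exact hgi
        exact code_ne hD gm hij (by omega) this
      have hc3 : cstar / D < L.length := by
        rw [hlenL]; exact code_div_lt hD gm (by omega)
      have hcQ : cstar ∈ Q := by
        rw [hQ, Finset.mem_filter, Finset.mem_sdiff]
        exact ⟨⟨hc1, hc2⟩, hc3⟩
      -- `Q ⊆ cands`
      have hQsub : Q ⊆ cands G v D C L := by
        intro c hc
        rw [hQ, Finset.mem_filter, Finset.mem_sdiff] at hc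
        obtain ⟨⟨hcP, hcu⟩, hcdiv⟩ := hc
        rw [hP, List.mem_toFinset] at hcP
        obtain ⟨i, hi, hgi⟩ := List.mem_iff_getElem.mp hcP
        rw [hlenm] at hi
        have hci : (exploreP G v D C m).2.getD i 0 = c := by
          rw [List.getD_eq_getElem _ 0 (by omega), hgi]
        have hij : j ≤ i := by
          by_contra hlt
          push_neg at hlt
          apply hcu
          rw [List.mem_toFinset]
          have : cs.getD i 0 = c := by
            rw [hcs, ← explore_snd_getD G v D C (by omega : j ≤ m) hlt, hci]
          rw [← this]
          exact getD_mem_of_lt (by omega) 0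
        have hcc := gm.code i hi
        rw [hci] at hcc
        rw [cands, Finset.mem_filter, Finset.mem_range] at hcc
        have hnxt : nxt G v D L c = nxt G v D (exploreP G v D C i).1 c := by
          rw [hL]
          exact (nxt_stable (C := C) hij (by omega)).symm
        have helem : (exploreP G v D C m).1.getD (i + 1) v
            = nxt G v D (exploreP G v D C i).1 c := by
          rw [explore_elem_eq G v D C (by omega), hci]
        have hwC : nxt G v D (exploreP G v D C i).1 c ∈ C := by
          rw [← helem]
          exact gm.mem _ (getD_mem_of_lt (by omega) v)
        have hwL : nxt G v D (exploreP G v D C i).1 c ∉ L := by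
          intro hmem
          obtain ⟨p, hp, hLp⟩ := List.mem_iff_getElem.mp hmem
          rw [hlenL] at hp
          have h1 : (exploreP G v D C m).1[p]'(by omega) =
              nxt G v D (exploreP G v D C i).1 c := by
            rw [← (explore_fst_prefix G v D C (by omega : j ≤ m)).getElem
              (by rw [explore_len1 G v D C j]; omega)]
            exact hLp
          have h2 : (exploreP G v D C m).1[i+1]'(by omega) =
              nxt G v D (exploreP G v D C i).1 c := by
            rw [← List.getD_eq_getElem _ v (by omega)]
            exact helem
          have := (gm.nd.getElem_inj_iff).mp (h1.trans h2.symm)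
          omega
        rw [cands, Finset.mem_filter, Finset.mem_range, hnxt]
        refine ⟨?_, hwC, hwL⟩
        have hmod : c % D < D := Nat.mod_lt c hD
        have hdm := Nat.div_add_mod c D
        calc c < D * (c / D) + D := by omega
        _ = D * (c / D + 1) := by ring
        _ ≤ D * L.length := Nat.mul_le_mul_left D hcdiv
        _ = L.length * D := Nat.mul_comm _ _
      -- conclude: the two picks agree
      have hQne : Q.Nonempty := ⟨cstar, hcQ⟩
      have hpick : pick Q = pick (cands G v D C L) := by
        refine le_antisymm ?_ ?_
        · rw [← hcstar]; exact pick_le hcQ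
        · exact pick_le (hQsub (pick_mem hQne))
      show (let s := decodeP G v D P j;
        let c := pick ((P \ s.2.toFinset).filter (fun c => c / D < s.1.length));
        (s.1 ++ [nxt G v D s.1 c], s.2 ++ [c])) = exploreP G v D C (j+1)
      rw [IH']
      show (L ++ [nxt G v D L (pick Q)], cs ++ [pick Q]) = exploreP G v D C (j+1)
      rw [hpick]
      rfl

end Decode



section Crossing

variable {n : ℕ} {G : SimpleGraph (Fin n)} {W : Finset (Fin n)} {v : Fin n}

lemma mem_compIn (hvW : v ∈ W) {w : Fin n} :
    w ∈ compIn G W v ↔ w ∈ W ∧ (restrictG G W).Reachable v w := by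
  rw [compIn, if_pos hvW, Finset.mem_filter]
  simp

lemma v_mem_compIn (hvW : v ∈ W) : v ∈ compIn G W v :=
  (mem_compIn hvW).mpr ⟨hvW, SimpleGraph.Reachable.refl v⟩

lemma compIn_subset_W (hvW : v ∈ W) : compIn G W v ⊆ W := by
  intro w hw
  exact ((mem_compIn hvW).mp hw).1

lemma walk_cross (hvW : v ∈ W) (Lf : Finset (Fin n)) (x w₀ : Fin n)
    (p : (restrictG G W).Walk x w₀) : x ∈ Lf → x ∈ compIn G W v → w₀ ∉ Lf →
    ∃ u ∈ Lf, ∃ w, w ∈ compIn G W v ∧ w ∉ Lf ∧ G.Adj u w := by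
  induction p with
  | nil =>
      intro h1 _ h3
      exact absurd h1 h3
  | @cons x y w₀ h p ih =>
      intro hx hxC hw0
      have hyC : y ∈ compIn G W v := by
        rw [mem_compIn hvW]
        refine ⟨(show G.Adj x y ∧ x ∈ W ∧ y ∈ W from h).2.2, ((mem_compIn hvW).mp hxC).2.trans ?_⟩
        exact SimpleGraph.Adj.reachable h
      by_cases hy : y ∈ Lf
      · exact ih hy hyC hw0
      · exact ⟨x, hx, y, hyC, hy, (show G.Adj x y ∧ x ∈ W ∧ y ∈ W from h).1⟩

lemma compIn_cross (hvW : v ∈ W) :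
    ∀ Lf : Finset (Fin n), v ∈ Lf → ↑Lf ⊆ (↑(compIn G W v) : Set (Fin n)) →
      Lf.card < (compIn G W v).card →
      ∃ u ∈ Lf, ∃ w, w ∈ compIn G W v ∧ w ∉ Lf ∧ G.Adj u w := by
  intro Lf hvL hsub hcard
  have hsub' : Lf ⊆ compIn G W v := Finset.coe_subset.mp hsub
  have hex : ∃ w₀, w₀ ∈ compIn G W v ∧ w₀ ∉ Lf := by
    by_contra hcon
    push_neg at hcon
    exact absurd (Finset.card_le_card (fun w hw => hcon w hw)) (not_le.mpr hcard)
  obtain ⟨w₀, hw₀C, hw₀L⟩ := hex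
  obtain ⟨p⟩ := ((mem_compIn hvW).mp hw₀C).2
  exact walk_cross hvW Lf v w₀ p hvL (v_mem_compIn hvW) hw₀L

end Crossing



section LeftCount

variable {n : ℕ} {G : SimpleGraph (Fin n)} {v : Fin n} {D : ℕ} {C : Finset (Fin n)} {m : ℕ}

lemma explore_adj (g : GoodE G v D C m) {i : ℕ} (him : i < m) :
    G.Adj ((exploreP G v D C m).1.getD ((exploreP G v D C m).2.getD i 0 / D) v)
          ((exploreP G v D C m).1.getD (i + 1) v) := by
  have hcode := g.code i him
  rw [cands, Finset.mem_filter, Finset.mem_range] at hcode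
  obtain ⟨hrange, hC, hnotin⟩ := hcode
  set c := (exploreP G v D C m).2.getD i 0 with hc
  have hdiv : c / D < i + 1 := by
    rw [Nat.div_lt_iff_lt_mul (by
      rcases Nat.eq_zero_or_pos D with h | h
      · rw [h, Nat.mul_zero] at hrange; omega
      · exact h)]
    rwa [explore_len1 G v D C i] at hrange
  set u := (exploreP G v D C i).1.getD (c / D) v with hu
  have hpar : (exploreP G v D C m).1.getD (c / D) v = u :=
    explore_fst_getD G v D C him.le hdiv
  have helem : (exploreP G v D C m).1.getD (i + 1) v = nxt G v D (exploreP G v D C i).1 c :=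
    explore_elem_eq G v D C him
  rw [hpar, helem]
  have hnxt : nxt G v D (exploreP G v D C i).1 c = nbr G v u (c % D) := rfl
  rw [hnxt]
  set sl := ((univ.filter (fun w => G.Adj u w)).sort (· ≤ ·)) with hsl
  by_cases hidx : c % D < sl.length
  · have : nbr G v u (c % D) ∈ sl := by
      rw [nbr, ← hsl, List.getD_eq_getElem sl v hidx]
      exact List.getElem_mem hidx
    rw [hsl, Finset.mem_sort, Finset.mem_filter] at this
    exact this.2
  · exfalso
    apply hnotin
    have : nbr G v u (c % D) = v := by
      rw [nbr, ← hsl]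
      exact List.getD_eq_default sl v (by omega)
    rw [hnxt, this]
    exact v_mem_explore i

lemma left_count {VL : Finset (Fin n)} {ΔL : ℕ} (hbip : Bipartite G VL)
    (hΔ : ∀ u ∈ VL, (univ.filter (fun w => G.Adj u w)).card ≤ ΔL)
    (hD : 1 ≤ D) (g : GoodE G v D C m) :
    m ≤ ((exploreP G v D C m).1.toFinset ∩ VL).card * ΔL := by
  classical
  set Lm := (exploreP G v D C m).1 with hLm
  have hlen : Lm.length = m + 1 := explore_len1 G v D C m
  set T := Lm.toFinset with hT
  set cd : ℕ → ℕ := fun i => (exploreP G v D C m).2.getD i 0 with hcd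
  set par : ℕ → Fin n := fun i => Lm.getD (cd i / D) v with hparf
  set child : ℕ → Fin n := fun i => Lm.getD (i + 1) v with hchildf
  have hdivlt : ∀ i, i < m → cd i / D < i + 1 := fun i him => code_div_lt hD g him
  have hadj : ∀ i, i < m → G.Adj (par i) (child i) := fun i him => explore_adj g him
  have hparmem : ∀ i, i < m → par i ∈ T := fun i him => by
    rw [hT, List.mem_toFinset]
    exact getD_mem_of_lt (by have := hdivlt i him; omega) v
  have hchildmem : ∀ i, i < m → child i ∈ T := fun i him => by
    rw [hT, List.mem_toFinset]
    exact getD_mem_of_lt (by omega) v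
  have hnd : Lm.Nodup := g.nd
  have getDinj : ∀ a b, a < m + 1 → b < m + 1 → Lm.getD a v = Lm.getD b v → a = b := by
    intro a b ha hb hab
    rw [List.getD_eq_getElem Lm v (n := a) (by omega),
      List.getD_eq_getElem Lm v (n := b) (by omega)] at hab
    exact (hnd.getElem_inj_iff).mp hab
  set f : ℕ → Fin n := fun i => if par i ∈ VL then par i else child i with hf
  have hfmem : ∀ i ∈ Finset.range m, f i ∈ T ∩ VL := by
    intro i hi
    rw [Finset.mem_range] at hi
    rw [Finset.mem_inter]
    simp only [hf]
    by_cases hp : par i ∈ VL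
    · rw [if_pos hp]; exact ⟨hparmem i hi, hp⟩
    · rw [if_neg hp]
      refine ⟨hchildmem i hi, ?_⟩
      have hiff := (hbip _ _ (hadj i hi))
      by_contra hcc
      exact hp (hiff.mpr hcc)
  have hsum := Finset.card_eq_sum_card_fiberwise hfmem
  rw [Finset.card_range] at hsum
  rw [hsum]
  have hfiber : ∀ u ∈ T ∩ VL,
      ((Finset.range m).filter (fun i => f i = u)).card ≤ ΔL := by
    intro u hu
    rw [Finset.mem_inter] at hu
    set gmap : ℕ → Fin n := fun i => if par i = u then child i else par i with hgm
    have hfu : ∀ i, f i = u → (par i = u ∧ par i ∈ VL) ∨ (child i = u ∧ par i ∉ VL) := by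
      intro i hfi
      simp only [hf] at hfi
      by_cases hp : par i ∈ VL
      · left; rw [if_pos hp] at hfi; exact ⟨hfi, hp⟩
      · right; rw [if_neg hp] at hfi; exact ⟨hfi, hp⟩
    have hinj : Set.InjOn gmap ((Finset.range m).filter (fun i => f i = u)) := by
      intro i₁ h₁ i₂ h₂ heq
      rw [Finset.mem_coe, Finset.mem_filter, Finset.mem_range] at h₁ h₂
      obtain ⟨hi₁, hf₁⟩ := h₁
      obtain ⟨hi₂, hf₂⟩ := h₂
      simp only [hgm] at heq
      rcases hfu i₁ hf₁ with ⟨hq₁, hv₁⟩ | ⟨hq₁, hv₁⟩ <;>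
        rcases hfu i₂ hf₂ with ⟨hq₂, hv₂⟩ | ⟨hq₂, hv₂⟩
      · rw [if_pos hq₁, if_pos hq₂] at heq
        have := getDinj (i₁ + 1) (i₂ + 1) (by omega) (by omega) heq
        omega
      · exfalso
        have hq₂' : ¬ (par i₂ = u) := fun hcon => hv₂ (hcon ▸ hu.2)
        rw [if_pos hq₁, if_neg hq₂'] at heq
        have e1 := getDinj (i₁ + 1) (cd i₂ / D) (by omega)
          (by have := hdivlt i₂ hi₂; omega) heq
        have e2 := getDinj (cd i₁ / D) (i₂ + 1) (by have := hdivlt i₁ hi₁; omega)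
          (by omega) (hq₁.trans hq₂.symm)
        have := hdivlt i₁ hi₁
        have := hdivlt i₂ hi₂
        omega
      · exfalso
        have hq₁' : ¬ (par i₁ = u) := fun hcon => hv₁ (hcon ▸ hu.2)
        rw [if_neg hq₁', if_pos hq₂] at heq
        have e1 := getDinj (cd i₁ / D) (i₂ + 1) (by have := hdivlt i₁ hi₁; omega)
          (by omega) heq
        have e2 := getDinj (i₁ + 1) (cd i₂ / D) (by omega)
          (by have := hdivlt i₂ hi₂; omega) (hq₁.trans hq₂.symm)
        have := hdivlt i₁ hi₁
        have := hdivlt i₂ hi₂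
        omega
      · have := getDinj (i₁ + 1) (i₂ + 1) (by omega) (by omega) (hq₁.trans hq₂.symm)
        omega
    have hmaps : ∀ i ∈ (Finset.range m).filter (fun i => f i = u),
        gmap i ∈ univ.filter (fun w => G.Adj u w) := by
      intro i hi
      rw [Finset.mem_filter, Finset.mem_range] at hi
      obtain ⟨hi, hfi⟩ := hi
      rw [Finset.mem_filter]
      refine ⟨Finset.mem_univ _, ?_⟩
      simp only [hgm]
      rcases hfu i hfi with ⟨hq, _⟩ | ⟨hq, hv⟩
      · rw [if_pos hq, ← hq]
        exact hadj i hi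
      · have hq' : ¬ (par i = u) := fun hcon => hv (hcon ▸ hu.2)
        rw [if_neg hq', ← hq]
        exact (hadj i hi).symm
    calc ((Finset.range m).filter (fun i => f i = u)).card
        ≤ (univ.filter (fun w => G.Adj u w)).card :=
          Finset.card_le_card_of_injOn gmap hmaps hinj
    _ ≤ ΔL := hΔ u hu.2
  calc ∑ u ∈ T ∩ VL, ((Finset.range m).filter (fun i => f i = u)).card
      ≤ ∑ u ∈ T ∩ VL, ΔL := Finset.sum_le_sum hfiber
  _ = (T ∩ VL).card * ΔL := by rw [Finset.sum_const, smul_eq_mul]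

end LeftCount



section Numerics

/-- Hypergeometric-type ratio bound, in product form. -/
lemma choose_ratio : ∀ (m l N : ℕ), m ≤ l → l ≤ N →
    (((N - m).choose (l - m) : ℝ)) * (N : ℝ) ^ m ≤ (N.choose l : ℝ) * (l : ℝ) ^ m := by
  intro m
  induction m with
  | zero => intro l N _ _; simp
  | succ m IH =>
      intro l N hm hl
      have IH' := IH l N (by omega) hl
      have hid : (N - m) * ((N - (m+1)).choose (l - (m+1)))
          = (N - m).choose (l - m) * (l - m) := by
        have h := Nat.add_one_mul_choose_eq (N - (m+1)) (l - (m+1))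
        have h1 : N - (m+1) + 1 = N - m := by omega
        have h2 : l - (m+1) + 1 = l - m := by omega
        rw [h1, h2] at h
        exact h
      have hc1 : ((N - m : ℕ) : ℝ) = (N : ℝ) - m := Nat.cast_sub (by omega)
      have hc2 : ((l - m : ℕ) : ℝ) = (l : ℝ) - m := Nat.cast_sub (by omega)
      have hid' : ((N : ℝ) - m) * ((N - (m+1)).choose (l - (m+1)) : ℝ)
          = ((N - m).choose (l - m) : ℝ) * ((l : ℝ) - m) := by
        have := congrArg (fun t : ℕ => (t : ℝ)) hid
        push_cast at this
        rwa [hc1, hc2] at this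
      set x : ℝ := ((N - (m+1)).choose (l - (m+1)) : ℝ) with hx
      set y : ℝ := ((N - m).choose (l - m) : ℝ) with hy
      have hNm : (0:ℝ) < (N : ℝ) - m := by
        have : (m : ℝ) + 1 ≤ (N : ℝ) := by exact_mod_cast (by omega : m + 1 ≤ N)
        linarith
      have hlm : (0:ℝ) ≤ (l : ℝ) - m := by
        have : (m : ℝ) + 1 ≤ (l : ℝ) := by exact_mod_cast hm
        linarith
      have hln : (l : ℝ) ≤ (N : ℝ) := by exact_mod_cast hl
      have hstep : ((l : ℝ) - m) * N ≤ (l : ℝ) * ((N : ℝ) - m) := by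
        have hm0 : (0:ℝ) ≤ (m : ℝ) := by positivity
        nlinarith
      have key : x * (N:ℝ)^m * (N:ℝ) * ((N:ℝ) - m)
          ≤ ((N.choose l : ℝ) * (l:ℝ)^m * (l:ℝ)) * ((N:ℝ) - m) := by
        calc x * (N:ℝ)^m * (N:ℝ) * ((N:ℝ) - m)
            = (((N:ℝ) - m) * x) * ((N:ℝ)^m * (N:ℝ)) := by ring
        _ = (y * ((l:ℝ) - m)) * ((N:ℝ)^m * (N:ℝ)) := by rw [hid']
        _ = (y * (N:ℝ)^m) * (((l:ℝ) - m) * (N:ℝ)) := by ring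
        _ ≤ ((N.choose l : ℝ) * (l:ℝ)^m) * ((l:ℝ) * ((N:ℝ) - m)) := by
            apply mul_le_mul IH' hstep (by positivity) (by positivity)
        _ = ((N.choose l : ℝ) * (l:ℝ)^m * (l:ℝ)) * ((N:ℝ) - m) := by ring
      have := le_of_mul_le_mul_right key hNm
      calc x * (N:ℝ)^(m+1) = x * (N:ℝ)^m * (N:ℝ) := by ring
      _ ≤ (N.choose l : ℝ) * (l:ℝ)^m * (l:ℝ) := this
      _ = (N.choose l : ℝ) * (l:ℝ)^(m+1) := by ring

/-- Counting supersets of a fixed set inside `powersetCard`. -/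
lemma card_supersets {n : ℕ} {A VL : Finset (Fin n)} (hA : A ⊆ VL) (ℓ : ℕ) :
    ((VL.powersetCard ℓ).filter (fun S => A ⊆ S)).card
      ≤ (VL.card - A.card).choose (ℓ - A.card) := by
  classical
  have h1 : ((VL.powersetCard ℓ).filter (fun S => A ⊆ S)).card
      ≤ ((VL \ A).powersetCard (ℓ - A.card)).card := by
    apply Finset.card_le_card_of_injOn (fun S => S \ A)
    · intro S hS
      rw [Finset.mem_coe, Finset.mem_filter, Finset.mem_powersetCard] at hS
      obtain ⟨⟨hSVL, hScard⟩, hAS⟩ := hS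
      rw [Finset.mem_coe]; simp only [Finset.mem_powersetCard]
      constructor
      · exact Finset.sdiff_subset_sdiff hSVL (le_refl A)
      · rw [Finset.card_sdiff_of_subset hAS, hScard]
    · intro S₁ h₁ S₂ h₂ heq
      rw [Finset.coe_filter, Set.mem_setOf_eq] at h₁ h₂
      have e₁ : S₁ = S₁ \ A ∪ A := (Finset.sdiff_union_of_subset h₁.2).symm
      have e₂ : S₂ = S₂ \ A ∪ A := (Finset.sdiff_union_of_subset h₂.2).symm
      have heq' : S₁ \ A = S₂ \ A := heq
      rw [e₁, e₂, heq']
  rw [Finset.card_powersetCard, Finset.card_sdiff_of_subset hA] at h1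
  exact h1

/-- `(1 + 1/r)^r ≤ e`. -/
lemma one_add_inv_pow_le (r : ℕ) (hr : 1 ≤ r) :
    ((r : ℝ) + 1) ^ r ≤ Real.exp 1 * (r : ℝ) ^ r := by
  have hr0 : (0:ℝ) < (r : ℝ) := by exact_mod_cast hr
  have h1 : (r : ℝ) + 1 ≤ (r : ℝ) * Real.exp (1 / r) := by
    have := Real.add_one_le_exp (1 / (r:ℝ))
    calc (r : ℝ) + 1 = (r : ℝ) * (1 / r + 1) := by field_simp; ring
    _ ≤ (r : ℝ) * Real.exp (1 / r) := by
        apply mul_le_mul_of_nonneg_left this (le_of_lt hr0)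
  calc ((r : ℝ) + 1) ^ r ≤ ((r : ℝ) * Real.exp (1 / r)) ^ r := by
        apply pow_le_pow_left₀ (by positivity) h1
  _ = (r : ℝ) ^ r * Real.exp (1 / r) ^ r := by rw [mul_pow]
  _ = (r : ℝ) ^ r * Real.exp 1 := by
      rw [← Real.exp_nat_mul]
      congr 1
      field_simp
  _ = Real.exp 1 * (r : ℝ) ^ r := by ring

/-- `r^r / r! ≤ e^r`. -/
lemma pow_div_factorial_le (r : ℕ) :
    ((r : ℝ)) ^ r / (r.factorial : ℝ) ≤ Real.exp 1 ^ r := by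
  have h := Real.sum_le_exp_of_nonneg (x := (r : ℝ)) (by positivity) (r + 1)
  have hterm : ((r : ℝ)) ^ r / (r.factorial : ℝ)
      ≤ ∑ i ∈ Finset.range (r + 1), (r : ℝ) ^ i / (i.factorial : ℝ) := by
    exact Finset.single_le_sum (f := fun i => (r : ℝ) ^ i / (i.factorial : ℝ))
      (fun i _ => by positivity) (Finset.self_mem_range_succ r)
  calc ((r : ℝ)) ^ r / (r.factorial : ℝ) ≤ Real.exp (r : ℝ) := le_trans hterm h
  _ = Real.exp 1 ^ r := by
      rw [← Real.exp_nat_mul]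
      norm_num

/-- The binomial bound `C(kD, k-1) ≤ (eD)^k`. -/
lemma choose_kD_bound (k D : ℕ) (hk : 1 ≤ k) (hD : 1 ≤ D) :
    (((k * D).choose (k - 1)) : ℝ) ≤ (Real.exp 1 * (D : ℝ)) ^ k := by
  have hD0 : (1:ℝ) ≤ (D : ℝ) := by exact_mod_cast hD
  have he1 : (1:ℝ) ≤ Real.exp 1 := by
    have := Real.add_one_le_exp (1:ℝ); linarith
  rcases eq_or_lt_of_le hk with h1 | h2
  · rw [← h1]
    simp only [Nat.sub_self, Nat.choose_zero_right, pow_one, Nat.cast_one]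
    nlinarith
  · set r := k - 1 with hr
    have hkr : k = r + 1 := by omega
    have hr1 : 1 ≤ r := by omega
    have hr0 : (0:ℝ) < (r : ℝ) := by exact_mod_cast hr1
    have hfac : (0:ℝ) < (r.factorial : ℝ) := by
      exact_mod_cast r.factorial_pos
    have hchoose : (((k * D).choose r) : ℝ) ≤ ((k * D : ℕ) : ℝ) ^ r / (r.factorial : ℝ) :=
      Nat.choose_le_pow_div r (k * D)
    have hkD : ((k * D : ℕ) : ℝ) ^ r = (k : ℝ) ^ r * (D : ℝ) ^ r := by
      push_cast
      rw [mul_pow]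
    have hkpow : ((k : ℝ)) ^ r ≤ Real.exp 1 * (r : ℝ) ^ r := by
      have : (k : ℝ) = (r : ℝ) + 1 := by rw [hkr]; push_cast; ring
      rw [this]
      exact one_add_inv_pow_le r hr1
    have hDr : (D : ℝ) ^ r ≤ (D : ℝ) ^ k := by
      apply pow_le_pow_right₀ hD0
      omega
    calc (((k * D).choose r) : ℝ)
        ≤ ((k * D : ℕ) : ℝ) ^ r / (r.factorial : ℝ) := hchoose
    _ = (k : ℝ) ^ r * (D : ℝ) ^ r / (r.factorial : ℝ) := by rw [hkD]
    _ ≤ (Real.exp 1 * (r : ℝ) ^ r) * (D : ℝ) ^ r / (r.factorial : ℝ) := by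
        gcongr
    _ = Real.exp 1 * ((r : ℝ) ^ r / (r.factorial : ℝ)) * (D : ℝ) ^ r := by ring
    _ ≤ Real.exp 1 * Real.exp 1 ^ r * (D : ℝ) ^ r := by
        gcongr
        exact pow_div_factorial_le r
    _ ≤ Real.exp 1 * Real.exp 1 ^ r * (D : ℝ) ^ k := by
        apply mul_le_mul_of_nonneg_left hDr (by positivity)
    _ = Real.exp 1 ^ k * (D : ℝ) ^ k := by
        rw [hkr]
        ring
    _ = (Real.exp 1 * (D : ℝ)) ^ k := by rw [mul_pow]

end Numerics


/-- Lemma 8.7: component-size tail bound.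
Sample a uniformly random subset `S` of `V_L` of size `ℓ = ⌈α·n_L⌉` with
`α ∈ (0,1/2)` and `α·n_L ≥ 1`, and let `S_v` be the connected component of
`v` in `G[S ∪ V_R]`.  Then for every `k ≥ 1`,
`Pr[|S_v| ≥ k] ≤ (e(Δ_L+Δ_R))^k · (2α)^((k−1)/Δ_L)`. -/
theorem statement16 {n : ℕ} (G : SimpleGraph (Fin n)) (VL : Finset (Fin n))
    (hbip : Bipartite G VL) (hΔL : 1 ≤ maxDegOn G VL)
    (α : ℝ) (hα0 : 0 < α) (hα1 : α < 1 / 2) (hαn : 1 ≤ α * (VL.card : ℝ))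
    (ℓ : ℕ) (hℓ : ℓ = ⌈α * (VL.card : ℝ)⌉₊)
    (v : Fin n) (k : ℕ) (hk : 1 ≤ k) :
    (((VL.powersetCard ℓ).filter
          (fun Sset => k ≤ (compIn G (Sset ∪ VLᶜ) v).card)).card : ℝ) /
        ((VL.powersetCard ℓ).card : ℝ) ≤
      (Real.exp 1 * ((maxDegOn G VL : ℝ) + (maxDegOn G VLᶜ : ℝ))) ^ k *
        (2 * α) ^ (((k : ℝ) - 1) / (maxDegOn G VL : ℝ)) := by
  classical
  set DL := maxDegOn G VL with hDLdef
  set DR := maxDegOn G VLᶜ with hDRdef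
  set Dk := DL + DR with hDkdef
  set N := VL.card with hNdef
  -- degree bounds
  have hdegL : ∀ u ∈ VL, (univ.filter (fun w => G.Adj u w)).card ≤ DL := by
    intro u hu
    exact Finset.le_sup (f := degIn G univ) hu
  have hdegR : ∀ u ∈ VLᶜ, (univ.filter (fun w => G.Adj u w)).card ≤ DR := by
    intro u hu
    exact Finset.le_sup (f := degIn G univ) hu
  have hdeg : ∀ u : Fin n, (univ.filter (fun w => G.Adj u w)).card ≤ Dk := by
    intro u
    by_cases hu : u ∈ VL
    · exact le_trans (hdegL u hu) (Nat.le_add_right _ _)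
    · exact le_trans (hdegR u (Finset.mem_compl.mpr hu)) (Nat.le_add_left _ _)
  have hDL1 : 1 ≤ DL := hΔL
  have hD1 : 1 ≤ Dk := le_trans hΔL (Nat.le_add_right _ _)
  have hDL0 : (0:ℝ) < (DL : ℝ) := by exact_mod_cast hDL1
  -- bounds on ℓ and N
  have hN2 : (2:ℝ) < (N:ℝ) := by nlinarith
  have hNR0 : (0:ℝ) < (N:ℝ) := by linarith
  have hN0 : 0 < N := by exact_mod_cast hNR0
  have hl1 : 1 ≤ ℓ := by
    rw [hℓ]
    rw [← Nat.ceil_one (R := ℝ)]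
    exact Nat.ceil_le_ceil hαn
  have hlle : (ℓ:ℝ) ≤ 2*α*(N:ℝ) := by
    rw [hℓ]
    have h1 := Nat.ceil_lt_add_one (by positivity : (0:ℝ) ≤ α * (N:ℝ))
    linarith
  have hl2a : (ℓ:ℝ)/(N:ℝ) ≤ 2*α := by
    rw [div_le_iff₀ hNR0]
    linarith
  have hlN : ℓ ≤ N := by
    have h1 : (ℓ:ℝ) < (N:ℝ) := by nlinarith
    exact_mod_cast h1.le
  have h2α0 : (0:ℝ) < 2*α := by linarith
  have h2α1 : 2*α ≤ (1:ℝ) := by linarith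
  -- the event and its encoding
  set E := (VL.powersetCard ℓ).filter
      (fun Sset => k ≤ (compIn G (Sset ∪ VLᶜ) v).card) with hE
  set enc : Finset (Fin n) → Finset ℕ :=
    fun S => ((exploreP G v Dk (compIn G (S ∪ VLᶜ) v) (k-1)).2).toFinset with henc
  set PP := (Finset.range (k * Dk)).powersetCard (k-1) with hPP
  have hWv : ∀ S ∈ E, v ∈ S ∪ VLᶜ := by
    intro S hS
    rw [hE, Finset.mem_filter] at hS
    by_contra hv
    rw [compIn, if_neg hv] at hS
    simp only [Finset.card_empty] at hS
    omega
  have hkC : ∀ S ∈ E, k - 1 + 1 ≤ (compIn G (S ∪ VLᶜ) v).card := by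
    intro S hS
    rw [hE, Finset.mem_filter] at hS
    omega
  have hgood : ∀ S ∈ E, GoodE G v Dk (compIn G (S ∪ VLᶜ) v) (k-1) := by
    intro S hS
    exact goodE hD1 hdeg (v_mem_compIn (hWv S hS)) (compIn_cross (hWv S hS)) (k-1) (hkC S hS)
  -- the encoding lands in `PP`
  have henc_mem : ∀ S ∈ E, enc S ∈ PP := by
    intro S hS
    have g := hgood S hS
    set C := compIn G (S ∪ VLᶜ) v with hC
    set cs := (exploreP G v Dk C (k-1)).2 with hcs
    have hcslen : cs.length = k - 1 := explore_len2 G v Dk C (k-1)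
    have hcodelt : ∀ i, i < k - 1 → cs.getD i 0 < k * Dk := by
      intro i hi
      have hc := g.code i hi
      rw [cands, Finset.mem_filter, Finset.mem_range, explore_len1 G v Dk C i] at hc
      calc cs.getD i 0 < (i+1) * Dk := hc.1
      _ ≤ k * Dk := Nat.mul_le_mul_right _ (by omega)
    have hnd : cs.Nodup := by
      rw [List.nodup_iff_getElem?_ne_getElem?]
      intro i j hij hj
      rw [hcslen] at hj
      have h1 : cs[i]? = some (cs.getD i 0) := by
        rw [List.getElem?_eq_getElem (by omega), List.getD_eq_getElem cs 0 (by omega)]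
      have h2 : cs[j]? = some (cs.getD j 0) := by
        rw [List.getElem?_eq_getElem (by omega), List.getD_eq_getElem cs 0 (by omega)]
      rw [h1, h2]
      intro hcon
      exact code_ne hD1 g hij hj (Option.some_injective _ hcon)
    rw [hPP, Finset.mem_powersetCard]
    constructor
    · intro c hc
      rw [henc] at hc
      simp only [← hC, ← hcs] at hc
      rw [List.mem_toFinset] at hc
      obtain ⟨i, hi, hci⟩ := List.mem_iff_getElem.mp hc
      rw [hcslen] at hi
      rw [Finset.mem_range, ← hci]
      rw [← List.getD_eq_getElem cs 0 (by omega)]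
      exact hcodelt i hi
    · rw [henc]
      simp only [← hC, ← hcs]
      rw [List.toFinset_card_of_nodup hnd, hcslen]
  have hcardsum := Finset.card_eq_sum_card_fiberwise henc_mem
  -- per-fiber bound
  set β : ℝ := (2 * α) ^ (((k : ℝ) - 1) / (DL : ℝ)) with hβ
  have hβ0 : 0 < β := Real.rpow_pos_of_pos h2α0 _
  have hgen : ∀ m : ℕ, k - 1 ≤ m * DL → m ≤ ℓ →
      ((N - m).choose (ℓ - m) : ℝ) ≤ (N.choose ℓ : ℝ) * β := by
    intro m hlc hmℓ
    have h3 : ((N - m).choose (ℓ - m) : ℝ) ≤ (N.choose ℓ : ℝ) * ((ℓ:ℝ)/(N:ℝ))^m := by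
      have hcr := choose_ratio m ℓ N hmℓ hlN
      have hNpos : (0:ℝ) < (N:ℝ)^m := by positivity
      calc ((N - m).choose (ℓ - m) : ℝ)
          = ((N - m).choose (ℓ - m) : ℝ) * (N:ℝ)^m / (N:ℝ)^m := by field_simp
      _ ≤ ((N.choose ℓ : ℝ) * (ℓ:ℝ)^m) / (N:ℝ)^m := by gcongr
      _ = (N.choose ℓ : ℝ) * ((ℓ:ℝ)/(N:ℝ))^m := by rw [div_pow]; ring
    have h4 : ((ℓ:ℝ)/(N:ℝ))^m ≤ (2*α)^m := pow_le_pow_left₀ (by positivity) hl2a m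
    have h5 : ((2*α):ℝ)^m ≤ β := by
      rw [hβ, ← Real.rpow_natCast (2*α) m]
      apply Real.rpow_le_rpow_of_exponent_ge h2α0 h2α1
      rw [div_le_iff₀ hDL0]
      have hc : ((k-1 : ℕ):ℝ) ≤ (m:ℝ) * (DL:ℝ) := by exact_mod_cast hlc
      have hk1 : ((k-1:ℕ):ℝ) = (k:ℝ) - 1 := by
        rw [Nat.cast_sub hk]; norm_num
      linarith
    calc ((N - m).choose (ℓ - m) : ℝ)
        ≤ (N.choose ℓ : ℝ) * ((ℓ:ℝ)/(N:ℝ))^m := h3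
    _ ≤ (N.choose ℓ : ℝ) * (2*α)^m := by gcongr
    _ ≤ (N.choose ℓ : ℝ) * β := mul_le_mul_of_nonneg_left h5 (by positivity)
  have hfib : ∀ P ∈ PP, ((E.filter (fun S => enc S = P)).card : ℝ)
      ≤ (N.choose ℓ : ℝ) * β := by
    intro P hP
    rcases Finset.eq_empty_or_nonempty (E.filter (fun S => enc S = P)) with he | ⟨S₀, hS₀⟩
    · rw [he]
      simp only [Finset.card_empty, Nat.cast_zero]
      positivity
    · have hS₀E : S₀ ∈ E := (Finset.mem_filter.mp hS₀).1
      have hS₀P : enc S₀ = P := (Finset.mem_filter.mp hS₀).2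
      set C₀ := compIn G (S₀ ∪ VLᶜ) v with hC₀
      set A := ((exploreP G v Dk C₀ (k-1)).1.toFinset ∩ VL) with hA
      set m := A.card with hm
      have hlc : k - 1 ≤ m * DL := left_count hbip hdegL hD1 (hgood S₀ hS₀E)
      have hAVL : A ⊆ VL := Finset.inter_subset_right
      -- every S in the fiber contains A
      have hAsub : ∀ S ∈ E.filter (fun S => enc S = P), A ⊆ S := by
        intro S hSf
        have hSE' : S ∈ E := (Finset.mem_filter.mp hSf).1
        have hencS : enc S = P := (Finset.mem_filter.mp hSf).2
        have d1 := decode_eq hD1 hdeg (v_mem_compIn (hWv S hSE'))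
          (compIn_cross (hWv S hSE')) (hkC S hSE') (k-1) le_rfl
        have d2 := decode_eq hD1 hdeg (v_mem_compIn (hWv S₀ hS₀E))
          (compIn_cross (hWv S₀ hS₀E)) (hkC S₀ hS₀E) (k-1) le_rfl
        have hP1 : ((exploreP G v Dk (compIn G (S ∪ VLᶜ) v) (k-1)).2).toFinset = P := hencS
        have hP2 : ((exploreP G v Dk C₀ (k-1)).2).toFinset = P := hS₀P
        rw [hP1] at d1
        rw [hP2] at d2
        have hdec : exploreP G v Dk (compIn G (S ∪ VLᶜ) v) (k-1)
            = exploreP G v Dk C₀ (k-1) := by rw [← d1, ← d2]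
        intro x hx
        rw [hA, Finset.mem_inter] at hx
        obtain ⟨hx1, hx2⟩ := hx
        rw [← hdec, List.mem_toFinset] at hx1
        have hxC : x ∈ compIn G (S ∪ VLᶜ) v := (hgood S hSE').mem x hx1
        have hxW : x ∈ S ∪ VLᶜ := compIn_subset_W (hWv S hSE') hxC
        rcases Finset.mem_union.mp hxW with h | h
        · exact h
        · exact absurd hx2 (Finset.mem_compl.mp h)
      have hmℓ : m ≤ ℓ := by
        have hc1 : A ⊆ S₀ := hAsub S₀ hS₀
        have hc2 : S₀.card = ℓ := by
          have := hS₀E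
          rw [hE, Finset.mem_filter, Finset.mem_powersetCard] at this
          exact this.1.2
        rw [hm, ← hc2]
        exact Finset.card_le_card hc1
      have h1 : (E.filter (fun S => enc S = P))
          ⊆ (VL.powersetCard ℓ).filter (fun S => A ⊆ S) := by
        intro S hSf
        have hSE' : S ∈ E := (Finset.mem_filter.mp hSf).1
        rw [Finset.mem_filter]
        refine ⟨?_, hAsub S hSf⟩
        rw [hE, Finset.mem_filter] at hSE'
        exact hSE'.1
      have h2 := card_supersets hAVL ℓ
      calc ((E.filter (fun S => enc S = P)).card : ℝ)
          ≤ ((N - m).choose (ℓ - m) : ℝ) := by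
            exact_mod_cast le_trans (Finset.card_le_card h1) h2
      _ ≤ (N.choose ℓ : ℝ) * β := hgen m hlc hmℓ
  -- summation
  have hPPcard : PP.card = (k * Dk).choose (k-1) := by
    rw [hPP, Finset.card_powersetCard, Finset.card_range]
  have hEbound : (E.card : ℝ) ≤ ((k * Dk).choose (k-1) : ℝ) * ((N.choose ℓ : ℝ) * β) := by
    rw [hcardsum]
    push_cast
    calc ∑ P ∈ PP, ((E.filter (fun S => enc S = P)).card : ℝ)
        ≤ ∑ _P ∈ PP, (N.choose ℓ : ℝ) * β := Finset.sum_le_sum hfib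
    _ = (PP.card : ℝ) * ((N.choose ℓ : ℝ) * β) := by
        rw [Finset.sum_const, nsmul_eq_mul]
    _ = ((k * Dk).choose (k-1) : ℝ) * ((N.choose ℓ : ℝ) * β) := by rw [hPPcard]
  -- conclude
  have hdenom : (VL.powersetCard ℓ).card = N.choose ℓ := Finset.card_powersetCard ℓ VL
  have hdpos : (0:ℝ) < ((VL.powersetCard ℓ).card : ℝ) := by
    rw [hdenom]
    exact_mod_cast Nat.choose_pos hlN
  rw [div_le_iff₀ hdpos]
  have hkD := choose_kD_bound k Dk hk hD1
  have hDkcast : ((DL : ℝ) + (DR : ℝ)) = (Dk : ℝ) := by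
    rw [hDkdef]; push_cast; ring
  rw [hDkcast]
  calc (E.card : ℝ) ≤ ((k * Dk).choose (k-1) : ℝ) * ((N.choose ℓ : ℝ) * β) := hEbound
  _ ≤ (Real.exp 1 * (Dk:ℝ))^k * ((N.choose ℓ : ℝ) * β) := by
      apply mul_le_mul_of_nonneg_right hkD (by positivity)
  _ = (Real.exp 1 * (Dk:ℝ))^k * β * ((VL.powersetCard ℓ).card : ℝ) := by
      rw [hdenom]; ring

end Paper
end
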